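/- arXiv:2512.24382 — 7 statements merged into one kernel-verified Lean document; each statement's English description precedes it below -/
import Mathlib

section
/- Let n ∈ ℕ, let a : Fin n → ℝ be strictly increasing, let z ∈ ℂ^n be nonzero, and let i be the largest index with z_i ≠ 0. Then, as t → −∞, the rescaled flow line t ↦ e^{t·a_i} · exp(−tA) z, whose j-th coordinate is e^{t(a_i − a_j)} z_j, converges in ℂ^n to the vector z_i · e_i. -/
/-- For a strictly increasing `a : Fin n → ℝ` and a nonzero `z ∈ ℂⁿ` whose largest
nonvanishing coordinate index is `i`, the rescaled flow line
`t ↦ e^{t aᵢ} · exp(−tA) z` (with `A = diag(a₀,…,a_{n−1})`), whose `j`-th coordinate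
is `e^{t(aᵢ − aⱼ)} zⱼ`, converges to `zᵢ · eᵢ` as `t → −∞`. -/
theorem stmt1 (n : ℕ) (a : Fin n → ℝ) (ha : StrictMono a) (z : Fin n → ℂ) (hz : z ≠ 0)
    (i : Fin n) (hi : z i ≠ 0) (hmax : ∀ j : Fin n, z j ≠ 0 → j ≤ i) :
    Filter.Tendsto
      (fun t : ℝ => fun j : Fin n => (Real.exp (t * (a i - a j)) : ℂ) * z j)
      Filter.atBot (nhds (Pi.single i (z i))) := by
  rw [tendsto_pi_nhds]
  intro j
  rcases lt_trichotomy j i with hji | hji | hji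
  · -- j < i : exponent a i - a j > 0, t → -∞, so term → 0
    have hpos : 0 < a i - a j := sub_pos.mpr (ha hji)
    have h0 : Filter.Tendsto (fun t : ℝ => Real.exp (t * (a i - a j)))
        Filter.atBot (nhds 0) := by
      apply Real.tendsto_exp_atBot.comp
      exact Filter.tendsto_atBot_atBot.mpr fun b =>
        ⟨b / (a i - a j), fun t ht => by
          calc t * (a i - a j) ≤ (b / (a i - a j)) * (a i - a j) := by
                exact mul_le_mul_of_nonneg_right ht (le_of_lt hpos)
            _ = b := div_mul_cancel₀ b (ne_of_gt hpos)⟩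
    have : Filter.Tendsto (fun t : ℝ => ((Real.exp (t * (a i - a j)) : ℂ)))
        Filter.atBot (nhds 0) := by
      exact (Complex.continuous_ofReal.tendsto 0).comp h0
    have := this.mul_const (z j)
    simpa [Pi.single_eq_of_ne (ne_of_lt hji)] using this
  · subst hji
    simp only [sub_self, mul_zero, Real.exp_zero, Complex.ofReal_one, one_mul,
      Pi.single_eq_same]
    exact tendsto_const_nhds
  · -- j > i : z j = 0
    have hzj : z j = 0 := by
      by_contra h
      exact absurd (hmax j h) (not_le.mpr hji)
    simp [hzj, Pi.single_eq_of_ne (ne_of_gt hji)]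
end

section
/- Let n, k ∈ ℕ with k ≤ n and let a : Fin n → ℝ be strictly increasing; set A = diag(a_0, …, a_{n−1}). For every k-dimensional subspace V ⊆ ℂ^n there exist k-element subsets I₋, I₊ ⊆ Fin n such that the orthogonal projection matrices P_{exp(−tA)·V} converge in operator norm, as t → −∞, to the orthogonal projection onto span{e_i : i ∈ I₋}, and, as t → +∞, to the orthogonal projection onto span{e_i : i ∈ I₊}. -/
open Filter ContinuousLinearMap

namespace Stmt3

/-- The linear map `exp(−tA) = diag(e^{−t a₀}, …, e^{−t a_{n−1}})` on `ℂⁿ`,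
for `A = diag(a₀, …, a_{n−1})`. -/
noncomputable def flowMap (n : ℕ) (a : Fin n → ℝ) (t : ℝ) :
    EuclideanSpace ℂ (Fin n) →ₗ[ℂ] EuclideanSpace ℂ (Fin n) :=
  ((WithLp.linearEquiv 2 ℂ (Fin n → ℂ)).symm.toLinearMap.comp
      (LinearMap.pi fun j : Fin n =>
        (Real.exp (-(t * a j)) : ℂ) • (LinearMap.proj j : (Fin n → ℂ) →ₗ[ℂ] ℂ))).comp
    (WithLp.linearEquiv 2 ℂ (Fin n → ℂ)).toLinearMap

/-- The orthogonal projection of `ℂⁿ` onto a subspace `V`, as a continuous linear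
map `ℂⁿ → ℂⁿ` (the "projection matrix"). -/
noncomputable def projCLM {n : ℕ} (V : Submodule ℂ (EuclideanSpace ℂ (Fin n))) :
    EuclideanSpace ℂ (Fin n) →L[ℂ] EuclideanSpace ℂ (Fin n) :=
  V.subtypeL.comp (Submodule.orthogonalProjection V)

/-- The coordinate subspace `span {eᵢ : i ∈ I}` of `ℂⁿ`. -/
noncomputable def coordSub (n : ℕ) (I : Finset (Fin n)) :
    Submodule ℂ (EuclideanSpace ℂ (Fin n)) :=
  Submodule.span ℂ ((fun i => EuclideanSpace.single i (1 : ℂ)) '' (I : Set (Fin n)))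

lemma flowMap_apply (n : ℕ) (a : Fin n → ℝ) (t : ℝ) (x : EuclideanSpace ℂ (Fin n)) (j : Fin n) :
    flowMap n a t x j = (Real.exp (-(t * a j)) : ℂ) * x j := rfl

def coordL (n : ℕ) (j : Fin n) : EuclideanSpace ℂ (Fin n) →ₗ[ℂ] ℂ where
  toFun x := x j
  map_add' _ _ := rfl
  map_smul' _ _ := rfl

lemma flowMap_injective (n : ℕ) (a : Fin n → ℝ) (t : ℝ) :
    Function.Injective (flowMap n a t) := by
  intro x y h
  ext j
  have h2 : flowMap n a t x j = flowMap n a t y j := congrArg (fun z => z j) h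
  rw [flowMap_apply, flowMap_apply] at h2
  exact mul_left_cancel₀ (by exact_mod_cast Real.exp_ne_zero _) h2

lemma flowMap_neg (n : ℕ) (a : Fin n → ℝ) (t : ℝ) :
    flowMap n (fun j => -a j) (-t) = flowMap n a t := by
  refine LinearMap.ext fun x => ?_
  ext j
  rw [flowMap_apply, flowMap_apply]
  norm_num

noncomputable def phi {n k : ℕ} (w : Fin k → EuclideanSpace ℂ (Fin n)) :
    EuclideanSpace ℂ (Fin k) →L[ℂ] EuclideanSpace ℂ (Fin n) :=
  LinearMap.toContinuousLinearMap (∑ m, (coordL k m).smulRight (w m))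

lemma phi_apply {n k : ℕ} (w : Fin k → EuclideanSpace ℂ (Fin n)) (c : EuclideanSpace ℂ (Fin k)) :
    phi w c = ∑ m, c m • w m := by
  simp [phi, LinearMap.smulRight_apply, coordL]
  rfl

lemma phi_single {n k : ℕ} (w : Fin k → EuclideanSpace ℂ (Fin n)) (m : Fin k) :
    phi w (EuclideanSpace.single m 1) = w m := by
  rw [phi_apply, Finset.sum_eq_single m]
  · rw [EuclideanSpace.single_apply]; simp
  · intro b _ hb
    rw [EuclideanSpace.single_apply]
    simp [hb]
  · simp

lemma phi_continuous {n k : ℕ} :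
    Continuous (fun w : Fin k → EuclideanSpace ℂ (Fin n) => phi w) := by
  have : IsLinearMap ℂ (fun w : Fin k → EuclideanSpace ℂ (Fin n) => phi w) := by
    constructor
    · intro w w'
      refine ContinuousLinearMap.ext fun c => ?_
      rw [ContinuousLinearMap.add_apply, phi_apply, phi_apply, phi_apply,
        ← Finset.sum_add_distrib]
      refine Finset.sum_congr rfl fun m _ => ?_
      rw [Pi.add_apply, smul_add]
    · intro s w
      refine ContinuousLinearMap.ext fun c => ?_
      rw [ContinuousLinearMap.smul_apply, phi_apply, phi_apply, Finset.smul_sum]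
      refine Finset.sum_congr rfl fun m _ => ?_
      rw [Pi.smul_apply, smul_comm]
  exact LinearMap.continuous_of_finiteDimensional this.mk'

lemma range_phi {n k : ℕ} (w : Fin k → EuclideanSpace ℂ (Fin n)) :
    LinearMap.range (phi w).toLinearMap = Submodule.span ℂ (Set.range w) := by
  apply le_antisymm
  · rintro x ⟨c, rfl⟩
    rw [ContinuousLinearMap.coe_coe, phi_apply]
    exact Submodule.sum_mem _ fun m _ =>
      Submodule.smul_mem _ _ (Submodule.subset_span ⟨m, rfl⟩)
  · rw [Submodule.span_le]
    rintro x ⟨m, rfl⟩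
    exact ⟨EuclideanSpace.single m 1, phi_single w m⟩

lemma isUnit_of_injective {k : ℕ} (g : EuclideanSpace ℂ (Fin k) →L[ℂ] EuclideanSpace ℂ (Fin k))
    (h : Function.Injective g) : IsUnit g := by
  have hbij : Function.Bijective g :=
    ⟨h, (LinearMap.injective_iff_surjective (f := (g : EuclideanSpace ℂ (Fin k) →ₗ[ℂ] _))).mp h⟩
  let e := LinearEquiv.ofBijective (g : EuclideanSpace ℂ (Fin k) →ₗ[ℂ] EuclideanSpace ℂ (Fin k)) hbij
  let ce := e.toContinuousLinearEquiv
  refine ⟨⟨g, (ce.symm : _ →L[ℂ] _), ?_, ?_⟩, rfl⟩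
  · refine ContinuousLinearMap.ext fun x => ?_
    rw [ContinuousLinearMap.mul_apply, ContinuousLinearMap.one_apply]
    exact ce.apply_symm_apply x
  · refine ContinuousLinearMap.ext fun x => ?_
    rw [ContinuousLinearMap.mul_apply, ContinuousLinearMap.one_apply]
    exact ce.symm_apply_apply x

lemma proj_formula {n k : ℕ} (M : EuclideanSpace ℂ (Fin k) →L[ℂ] EuclideanSpace ℂ (Fin n))
    (hU : IsUnit (adjoint M ∘L M)) :
    projCLM (LinearMap.range M.toLinearMap) =
      M ∘L (Ring.inverse (adjoint M ∘L M) ∘L adjoint M) := by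
  refine ContinuousLinearMap.ext fun x => ?_
  show (LinearMap.range M.toLinearMap).starProjection x = _
  apply Submodule.eq_starProjection_of_mem_of_inner_eq_zero
  · exact ⟨Ring.inverse (adjoint M ∘L M) (adjoint M x), rfl⟩
  · rintro w ⟨y, rfl⟩
    rw [ContinuousLinearMap.coe_coe, inner_sub_left]
    have h1 : (inner ℂ (M ((Ring.inverse (adjoint M ∘L M) ∘L adjoint M) x)) (M y) : ℂ)
        = inner ℂ ((adjoint M ∘L M) ((Ring.inverse (adjoint M ∘L M)) (adjoint M x))) y := by
      rw [comp_apply, ← adjoint_inner_left]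
      rfl
    have h2 : (adjoint M ∘L M) ((Ring.inverse (adjoint M ∘L M)) (adjoint M x)) = adjoint M x := by
      have hm := Ring.mul_inverse_cancel _ hU
      calc (adjoint M ∘L M) ((Ring.inverse (adjoint M ∘L M)) (adjoint M x))
          = ((adjoint M ∘L M) * Ring.inverse (adjoint M ∘L M)) (adjoint M x) := rfl
        _ = adjoint M x := by rw [hm]; rfl
    rw [comp_apply, h1, h2, adjoint_inner_left, sub_self]

lemma tendsto_clm_comp {α : Type*} {k m n : ℕ} {l : Filter α}
    {f : α → (EuclideanSpace ℂ (Fin m) →L[ℂ] EuclideanSpace ℂ (Fin n))}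
    {g : α → (EuclideanSpace ℂ (Fin k) →L[ℂ] EuclideanSpace ℂ (Fin m))}
    {F : EuclideanSpace ℂ (Fin m) →L[ℂ] EuclideanSpace ℂ (Fin n)}
    {G : EuclideanSpace ℂ (Fin k) →L[ℂ] EuclideanSpace ℂ (Fin m)}
    (hf : Tendsto f l (nhds F)) (hg : Tendsto g l (nhds G)) :
    Tendsto (fun x => f x ∘L g x) l (nhds (F ∘L G)) :=
  ((isBoundedBilinearMap_comp (𝕜 := ℂ)).continuous.tendsto (F, G)).comp (hf.prodMk_nhds hg)

set_option maxHeartbeats 1000000 in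
lemma echelon (n : ℕ) (a : Fin n → ℝ) :
    ∀ (k : ℕ) (V : Submodule ℂ (EuclideanSpace ℂ (Fin n))), Module.finrank ℂ V = k →
    ∃ (ι : Fin k → Fin n) (v : Fin k → EuclideanSpace ℂ (Fin n)),
      Function.Injective ι ∧ (∀ m, v m ∈ V) ∧ (∀ m, v m (ι m) = 1) ∧
      (∀ m j, a j < a (ι m) → v m j = 0) ∧
      Submodule.span ℂ (Set.range v) = V ∧ LinearIndependent ℂ v := by
  intro k
  induction k with
  | zero =>
    intro V hV
    refine ⟨Fin.elim0, Fin.elim0, fun m => m.elim0, fun m => m.elim0, fun m => m.elim0,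
      fun m => m.elim0, ?_, linearIndependent_empty_type⟩
    rw [Set.range_eq_empty, Submodule.span_empty]
    exact (Submodule.finrank_eq_zero.mp hV).symm
  | succ k ih =>
    intro V hV
    classical
    have hne : V ≠ ⊥ := by
      intro h
      rw [h] at hV
      simp at hV
    obtain ⟨x, hxV, hx0⟩ := Submodule.exists_mem_ne_zero_of_ne_bot hne
    set T : Finset (Fin n) := Finset.univ.filter (fun j => ∃ y ∈ V, y j ≠ 0) with hT
    have hTne : T.Nonempty := by
      have hex : ∃ j, x j ≠ 0 := by
        by_contra hc
        push_neg at hc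
        exact hx0 (by ext j; exact hc j)
      obtain ⟨j, hj⟩ := hex
      exact ⟨j, by simp [hT]; exact ⟨x, hxV, hj⟩⟩
    obtain ⟨j₀, hj₀T, hj₀min⟩ := T.exists_min_image a hTne
    obtain ⟨u, huV, huj₀⟩ : ∃ y ∈ V, y j₀ ≠ 0 := by simpa [hT] using hj₀T
    set u' : EuclideanSpace ℂ (Fin n) := (u j₀)⁻¹ • u with hu'
    have hu'V : u' ∈ V := V.smul_mem _ huV
    have hu'j₀ : u' j₀ = 1 := by
      show (u j₀)⁻¹ * u j₀ = 1
      exact inv_mul_cancel₀ huj₀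
    have hkey : ∀ y ∈ V, ∀ j, a j < a j₀ → y j = 0 := by
      intro y hyV j hj
      by_contra hyj
      have hmem : j ∈ T := by simp [hT]; exact ⟨y, hyV, hyj⟩
      exact absurd (hj₀min j hmem) (not_le.mpr hj)
    set V' : Submodule ℂ (EuclideanSpace ℂ (Fin n)) := V ⊓ LinearMap.ker (coordL n j₀) with hV'
    have hV'rank : Module.finrank ℂ V' = k := by
      set φ : V →ₗ[ℂ] ℂ := (coordL n j₀).comp V.subtype with hφ
      have hrange : LinearMap.range φ = ⊤ := by
        rw [eq_top_iff]
        intro c _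
        exact ⟨c • ⟨u', hu'V⟩, by
          simp [hφ, coordL]
          show c • u' j₀ = c
          rw [hu'j₀]; simp⟩
      have hrn := φ.finrank_range_add_finrank_ker
      rw [hrange, hV] at hrn
      have hkerk : Module.finrank ℂ (LinearMap.ker φ) = k := by
        have h1 : Module.finrank ℂ (⊤ : Submodule ℂ ℂ) = 1 := by simp
        omega
      have hker : LinearMap.ker φ = Submodule.comap V.subtype (LinearMap.ker (coordL n j₀)) :=
        LinearMap.ker_comp _ _
      have hmap : Submodule.map V.subtype (LinearMap.ker φ)
          = V ⊓ LinearMap.ker (coordL n j₀) := by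
        rw [hker, Submodule.map_comap_subtype]
      rw [hV', ← hmap, Submodule.finrank_map_subtype_eq, hkerk]
    obtain ⟨ι', v', hι', hmem', hone', hzero', hspan', hind'⟩ := ih V' hV'rank
    have hV'j₀ : ∀ y ∈ V', y j₀ = 0 := by
      intro y hy
      rw [hV'] at hy
      exact hy.2
    have hι'j₀ : ∀ m, ι' m ≠ j₀ := by
      intro m h
      have h1 := hone' m
      rw [h, hV'j₀ _ (hmem' m)] at h1
      exact zero_ne_one h1
    refine ⟨Fin.cons j₀ ι', Fin.cons u' v', ?_, ?_, ?_, ?_, ?_, ?_⟩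
    · intro m m' h
      induction m using Fin.cases with
      | zero =>
        induction m' using Fin.cases with
        | zero => rfl
        | succ p' =>
          rw [Fin.cons_zero, Fin.cons_succ] at h
          exact absurd h.symm (hι'j₀ p')
      | succ p =>
        induction m' using Fin.cases with
        | zero =>
          rw [Fin.cons_succ, Fin.cons_zero] at h
          exact absurd h (hι'j₀ p)
        | succ p' =>
          rw [Fin.cons_succ, Fin.cons_succ] at h
          rw [hι' h]
    · intro m
      induction m using Fin.cases with
      | zero => rw [Fin.cons_zero]; exact hu'V
      | succ p =>
        rw [Fin.cons_succ]
        have h1 := hmem' p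
        rw [hV'] at h1
        exact h1.1
    · intro m
      induction m using Fin.cases with
      | zero => rw [Fin.cons_zero, Fin.cons_zero]; exact hu'j₀
      | succ p => rw [Fin.cons_succ, Fin.cons_succ]; exact hone' p
    · intro m j hj
      induction m using Fin.cases with
      | zero =>
        rw [Fin.cons_zero] at hj
        rw [Fin.cons_zero]
        exact hkey u' hu'V j hj
      | succ p =>
        rw [Fin.cons_succ] at hj
        rw [Fin.cons_succ]
        exact hzero' p j hj
    · rw [Fin.range_cons, Submodule.span_insert, hspan']
      apply le_antisymm
      · exact sup_le ((Submodule.span_singleton_le_iff_mem _ _).mpr hu'V)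
          (by rw [hV']; exact inf_le_left)
      · intro y hyV
        have h1 : y - y j₀ • u' ∈ V' := by
          rw [hV']
          refine ⟨V.sub_mem hyV (V.smul_mem _ hu'V), ?_⟩
          show y j₀ - y j₀ * u' j₀ = 0
          rw [hu'j₀]; ring
        have hy : y = y j₀ • u' + (y - y j₀ • u') := by abel
        rw [hy]
        exact Submodule.add_mem _
          (Submodule.mem_sup_left (Submodule.mem_span_singleton.mpr ⟨y j₀, rfl⟩))
          (Submodule.mem_sup_right h1)
    · rw [linearIndependent_fin_cons]
      refine ⟨hind', ?_⟩
      rw [hspan']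
      intro h
      have h1 := hV'j₀ _ h
      rw [hu'j₀] at h1
      exact one_ne_zero h1

set_option maxHeartbeats 3000000 in
lemma main (n k : ℕ) (a : Fin n → ℝ) (ha : Function.Injective a)
    (V : Submodule ℂ (EuclideanSpace ℂ (Fin n))) (hV : Module.finrank ℂ V = k) :
    ∃ I : Finset (Fin n), I.card = k ∧
      Tendsto (fun t : ℝ => projCLM (V.map (flowMap n a t))) atTop
        (nhds (projCLM (coordSub n I))) := by
  classical
  obtain ⟨ι, v, hι, hmem, hone, hzero, hspan, hind⟩ := echelon n a k V hV
  refine ⟨Finset.univ.image ι,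
    by rw [Finset.card_image_of_injective _ hι, Finset.card_univ, Fintype.card_fin], ?_⟩
  set w : ℝ → Fin k → EuclideanSpace ℂ (Fin n) :=
    fun t m => (Real.exp (t * a (ι m)) : ℂ) • flowMap n a t (v m) with hw
  set winf : Fin k → EuclideanSpace ℂ (Fin n) :=
    fun m => EuclideanSpace.single (ι m) (1 : ℂ) with hwinf
  have hwc : ∀ t m j, w t m j = (Real.exp (t * (a (ι m) - a j)) : ℂ) * v m j := by
    intro t m j
    show (Real.exp (t * a (ι m)) : ℂ) * flowMap n a t (v m) j = _
    rw [flowMap_apply, ← mul_assoc, ← Complex.ofReal_mul, ← Real.exp_add]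
    have : t * a (ι m) + -(t * a j) = t * (a (ι m) - a j) := by ring
    rw [this]
  -- Tendsto of w
  have hwten : Tendsto w atTop (nhds winf) := by
    rw [tendsto_pi_nhds]
    intro m
    have hemb := (EuclideanSpace.equiv (Fin n) ℂ).toHomeomorph.isInducing
    rw [hemb.tendsto_nhds_iff]
    rw [tendsto_pi_nhds]
    intro j
    have hcoord : ∀ t : ℝ, ((EuclideanSpace.equiv (Fin n) ℂ) ∘ fun t => w t m) t j
        = (Real.exp (t * (a (ι m) - a j)) : ℂ) * v m j := fun t => hwc t m j
    have hlim : (EuclideanSpace.equiv (Fin n) ℂ).toHomeomorph (winf m) j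
        = EuclideanSpace.single (ι m) (1 : ℂ) j := rfl
    refine Tendsto.congr (fun t => (hcoord t).symm) ?_
    rw [hlim, EuclideanSpace.single_apply]
    by_cases hj : j = ι m
    · rw [if_pos hj]
      have hconst : ∀ t : ℝ, (Real.exp (t * (a (ι m) - a j)) : ℂ) * v m j = 1 := by
        intro t
        rw [hj, sub_self, mul_zero, Real.exp_zero, hone m]
        norm_num
      exact tendsto_const_nhds.congr fun t => (hconst t).symm
    · rw [if_neg hj]
      by_cases hv : v m j = 0
      · simpa [hv] using (tendsto_const_nhds : Tendsto (fun _ : ℝ => (0:ℂ)) atTop (nhds 0))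
      · have hlt : a (ι m) < a j := by
          rcases lt_trichotomy (a j) (a (ι m)) with h | h | h
          · exact absurd (hzero m j h) hv
          · exact absurd (ha h) hj
          · exact h
        have hneg : a (ι m) - a j < 0 := by linarith
        have h1 : Tendsto (fun t : ℝ => t * (a (ι m) - a j)) atTop atBot :=
          Tendsto.atTop_mul_const_of_neg hneg tendsto_id
        have h2 : Tendsto (fun t : ℝ => Real.exp (t * (a (ι m) - a j))) atTop (nhds 0) :=
          Real.tendsto_exp_atBot.comp h1
        have h3 : Tendsto (fun t : ℝ => (Real.exp (t * (a (ι m) - a j)) : ℂ)) atTop (nhds 0) := by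
          have h := (Complex.continuous_ofReal.tendsto 0).comp h2
          rw [Complex.ofReal_zero] at h
          exact h
        simpa using h3.mul_const (v m j)
  set Mt : ℝ → (EuclideanSpace ℂ (Fin k) →L[ℂ] EuclideanSpace ℂ (Fin n)) :=
    fun t => phi (w t) with hMt
  set Minf : EuclideanSpace ℂ (Fin k) →L[ℂ] EuclideanSpace ℂ (Fin n) := phi winf with hMinf
  have hMten : Tendsto Mt atTop (nhds Minf) := (phi_continuous.tendsto winf).comp hwten
  have hadjten : Tendsto (fun t => adjoint (Mt t)) atTop (nhds (adjoint Minf)) := by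
    have hc : Continuous (fun N : EuclideanSpace ℂ (Fin k) →L[ℂ] EuclideanSpace ℂ (Fin n) =>
        adjoint N) := (ContinuousLinearMap.adjoint (𝕜 := ℂ)
          (E := EuclideanSpace ℂ (Fin k)) (F := EuclideanSpace ℂ (Fin n))).continuous
    exact (hc.tendsto Minf).comp hMten
  have hGten : Tendsto (fun t => adjoint (Mt t) ∘L Mt t) atTop
      (nhds (adjoint Minf ∘L Minf)) := tendsto_clm_comp hadjten hMten
  have horth : Orthonormal ℂ winf :=
    (EuclideanSpace.orthonormal_single (𝕜 := ℂ) (ι := Fin n)).comp ι hι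
  have hGinf : adjoint Minf ∘L Minf = 1 := by
    refine ContinuousLinearMap.ext fun c => ?_
    rw [comp_apply, ContinuousLinearMap.one_apply]
    refine ext_inner_right ℂ fun d => ?_
    rw [adjoint_inner_left, hMinf, phi_apply, phi_apply]
    simp [sum_inner, inner_sum, inner_smul_left, inner_smul_right,
      orthonormal_iff_ite.mp horth, mul_ite, mul_zero, mul_one, Finset.sum_ite_eq,
      PiLp.inner_apply, RCLike.inner_apply]
  have hMtrepr : ∀ (t : ℝ) (c : EuclideanSpace ℂ (Fin k)),
      Mt t c = flowMap n a t (∑ m, (c m * (Real.exp (t * a (ι m)) : ℂ)) • v m) := by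
    intro t c
    show phi (w t) c = _
    rw [phi_apply, map_sum]
    refine Finset.sum_congr rfl fun m _ => ?_
    rw [map_smul, smul_smul]
  have hMtinj : ∀ t, Function.Injective (Mt t) := by
    intro t
    refine (injective_iff_map_eq_zero (Mt t)).mpr fun c hc => ?_
    rw [hMtrepr] at hc
    have h0 : (∑ m, (c m * (Real.exp (t * a (ι m)) : ℂ)) • v m) = 0 :=
      flowMap_injective n a t (by rw [map_zero]; exact hc)
    have hz := linearIndependent_iff'.mp hind Finset.univ _ h0
    ext m
    have hm := hz m (Finset.mem_univ m)
    rcases mul_eq_zero.mp hm with h | h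
    · exact h
    · exact absurd h (by exact_mod_cast Real.exp_ne_zero _)
  have hGinj : ∀ t, Function.Injective (adjoint (Mt t) ∘L Mt t) := by
    intro t
    refine (injective_iff_map_eq_zero _).mpr fun c hc => ?_
    have h1 : (inner ℂ (Mt t c) (Mt t c) : ℂ) = 0 := by
      rw [← adjoint_inner_left]
      calc (inner ℂ (adjoint (Mt t) (Mt t c)) c : ℂ)
          = inner ℂ ((adjoint (Mt t) ∘L Mt t) c) c := rfl
        _ = 0 := by rw [hc, inner_zero_left]
    exact hMtinj t (by rw [map_zero]; exact inner_self_eq_zero.mp h1)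
  have hrange : ∀ t, LinearMap.range (Mt t).toLinearMap = V.map (flowMap n a t) := by
    intro t
    show LinearMap.range (phi (w t)).toLinearMap = _
    rw [range_phi, ← hspan, Submodule.map_span]
    apply le_antisymm
    · rw [Submodule.span_le]
      rintro x ⟨m, rfl⟩
      exact Submodule.smul_mem _ _
        (Submodule.subset_span ⟨v m, ⟨m, rfl⟩, rfl⟩)
    · rw [Submodule.span_le]
      rintro x ⟨y, ⟨m, rfl⟩, rfl⟩
      have hx : flowMap n a t (v m) = (Real.exp (t * a (ι m)) : ℂ)⁻¹ • w t m := by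
        show _ = (Real.exp (t * a (ι m)) : ℂ)⁻¹ • ((Real.exp (t * a (ι m)) : ℂ) • flowMap n a t (v m))
        rw [smul_smul, inv_mul_cancel₀ (by exact_mod_cast Real.exp_ne_zero _), one_smul]
      rw [hx]
      exact Submodule.smul_mem _ _ (Submodule.subset_span ⟨m, rfl⟩)
  have hUnit : ∀ t, IsUnit (adjoint (Mt t) ∘L Mt t) := fun t => isUnit_of_injective _ (hGinj t)
  have hfin : ∀ t, projCLM (V.map (flowMap n a t))
      = Mt t ∘L (Ring.inverse (adjoint (Mt t) ∘L Mt t) ∘L adjoint (Mt t)) := fun t => by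
    rw [← hrange t]
    exact proj_formula _ (hUnit t)
  have hinvten : Tendsto (fun t => Ring.inverse (adjoint (Mt t) ∘L Mt t)) atTop
      (nhds (Ring.inverse (adjoint Minf ∘L Minf))) := by
    have hca : ContinuousAt (Ring.inverse : (EuclideanSpace ℂ (Fin k) →L[ℂ] EuclideanSpace ℂ (Fin k)) → _)
        ((1 : (EuclideanSpace ℂ (Fin k) →L[ℂ] EuclideanSpace ℂ (Fin k))ˣ) : _) :=
      NormedRing.inverse_continuousAt 1
    have hG1 : Tendsto (fun t => adjoint (Mt t) ∘L Mt t) atTop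
        (nhds ((1 : (EuclideanSpace ℂ (Fin k) →L[ℂ] EuclideanSpace ℂ (Fin k))ˣ) : _)) := by
      rw [Units.val_one, ← hGinf]
      exact hGten
    have := hca.tendsto.comp hG1
    rw [hGinf]
    simp only [Units.val_one] at this
    exact this
  have hfinal : Tendsto
      (fun t => Mt t ∘L (Ring.inverse (adjoint (Mt t) ∘L Mt t) ∘L adjoint (Mt t))) atTop
      (nhds (Minf ∘L (Ring.inverse (adjoint Minf ∘L Minf) ∘L adjoint Minf))) :=
    tendsto_clm_comp hMten (tendsto_clm_comp hinvten hadjten)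
  have hcoordeq : LinearMap.range Minf.toLinearMap = coordSub n (Finset.univ.image ι) := by
    show LinearMap.range (phi winf).toLinearMap = _
    rw [range_phi, coordSub]
    congr 1
    ext x
    constructor
    · rintro ⟨m, rfl⟩
      exact ⟨ι m, by simp, rfl⟩
    · rintro ⟨i, hi, rfl⟩
      obtain ⟨m, _, rfl⟩ := Finset.mem_image.mp hi
      exact ⟨m, rfl⟩
  have hlimeq : projCLM (coordSub n (Finset.univ.image ι))
      = Minf ∘L (Ring.inverse (adjoint Minf ∘L Minf) ∘L adjoint Minf) := by
    rw [← hcoordeq]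
    exact proj_formula _ (by rw [hGinf]; exact isUnit_one)
  rw [hlimeq]
  exact hfinal.congr fun t => (hfin t).symm

/-- Every flow line of `V ↦ exp(−tA)·V` on the Grassmannian of `k`-planes in `ℂⁿ`
converges, in the operator norm on projections, to coordinate subspaces as
`t → −∞` and as `t → +∞`. -/
theorem stmt3 (n k : ℕ) (hk : k ≤ n) (a : Fin n → ℝ) (ha : StrictMono a)
    (V : Submodule ℂ (EuclideanSpace ℂ (Fin n))) (hV : Module.finrank ℂ V = k) :
    ∃ Iminus Iplus : Finset (Fin n), Iminus.card = k ∧ Iplus.card = k ∧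
      Filter.Tendsto (fun t : ℝ => projCLM (V.map (flowMap n a t))) Filter.atBot
        (nhds (projCLM (coordSub n Iminus))) ∧
      Filter.Tendsto (fun t : ℝ => projCLM (V.map (flowMap n a t))) Filter.atTop
        (nhds (projCLM (coordSub n Iplus))) := by
  obtain ⟨Iplus, hIp, hp⟩ := main n k a ha.injective V hV
  obtain ⟨Iminus, hIm, hm⟩ := main n k (fun j => -a j)
    (fun i j h => ha.injective (neg_injective h)) V hV
  refine ⟨Iminus, Iplus, hIm, hIp, ?_, hp⟩
  have h1 := hm.comp tendsto_neg_atBot_atTop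
  refine h1.congr fun t => ?_
  show projCLM (V.map (flowMap n (fun j => -a j) (-t))) = _
  rw [flowMap_neg]


end Stmt3
end

section
/- Let A be an n×n Hermitian complex matrix and let P be an n×n matrix with P² = P = Pᴴ and rank(P) = k. The following are equivalent: (i) for every differentiable curve t ↦ P(t) of n×n matrices satisfying P(t)² = P(t) = P(t)ᴴ and rank(P(t)) = k for all t, with P(0) = P, the derivative of t ↦ Re Tr(A P(t)) at t = 0 vanishes; (ii) A P = P A. Moreover, if A = diag(a) with a : Fin n → ℝ injective, then (i)–(ii) hold if and only if P is the orthogonal projection onto span{e_i : i ∈ I} for some k-element subset I ⊆ Fin n. -/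
open Matrix

section Aux

attribute [local instance] Matrix.linftyOpNormedAddCommGroup Matrix.linftyOpNormedRing
  Matrix.linftyOpNormedAlgebra

/-- Evaluation of a matrix entry as a continuous `ℝ`-linear map. -/
noncomputable def entryCLM (n : ℕ) (i j : Fin n) : Matrix (Fin n) (Fin n) ℂ →L[ℝ] ℂ :=
  LinearMap.toContinuousLinearMap
    { toFun := fun M => M i j, map_add' := fun _ _ => rfl, map_smul' := fun _ _ => rfl }

lemma hasDerivAt_traceRe {n : ℕ} (A : Matrix (Fin n) (Fin n) ℂ)
    (Q : ℝ → Matrix (Fin n) (Fin n) ℂ) (D : Matrix (Fin n) (Fin n) ℂ)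
    (hQ : ∀ i j, HasDerivAt (fun t => Q t i j) (D i j) 0) :
    HasDerivAt (fun t => (Matrix.trace (A * Q t)).re) ((Matrix.trace (A * D)).re) 0 := by
  have key : ∀ M : Matrix (Fin n) (Fin n) ℂ,
      (Matrix.trace (A * M)).re = ∑ i, ∑ j, (A i j * M j i).re := by
    intro M
    simp [Matrix.trace, Matrix.diag, Matrix.mul_apply, Complex.re_sum]
  simp only [key]
  apply HasDerivAt.fun_sum; intro i _
  apply HasDerivAt.fun_sum; intro j _
  exact Complex.reCLM.hasFDerivAt.comp_hasDerivAt 0 ((hQ j i).const_mul (A i j))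

lemma tangent_rel {n : ℕ} (Q : ℝ → Matrix (Fin n) (Fin n) ℂ)
    (P D : Matrix (Fin n) (Fin n) ℂ)
    (hQ : ∀ i j, HasDerivAt (fun t => Q t i j) (D i j) 0)
    (hQ2 : ∀ t, Q t * Q t = Q t) (hQ0 : Q 0 = P) :
    D * P + P * D = D := by
  ext i j
  have h1 : HasDerivAt (fun t => ∑ l, Q t i l * Q t l j)
      (∑ l, (D i l * P l j + P i l * D l j)) 0 := by
    apply HasDerivAt.fun_sum
    intro l _
    have := (hQ i l).fun_mul (hQ l j)
    simpa [hQ0] using this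
  have h2 : (fun t => ∑ l, Q t i l * Q t l j) = fun t => Q t i j := by
    funext t
    rw [← Matrix.mul_apply, hQ2]
  rw [h2] at h1
  have := h1.unique (hQ i j)
  simp only [Matrix.add_apply, Matrix.mul_apply]
  rw [← this, Finset.sum_add_distrib]

lemma pdp_zero {n : ℕ} (P D : Matrix (Fin n) (Fin n) ℂ)
    (hP2 : P * P = P) (hD : D * P + P * D = D) : P * D * P = 0 := by
  have h1 : P * (D * P + P * D) * P = P * D * P := by rw [hD]
  have h2 : P * (D * P + P * D) * P = P * D * P + P * D * P := by
    simp only [Matrix.mul_add, Matrix.add_mul]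
    rw [← Matrix.mul_assoc P D P, ← Matrix.mul_assoc P P D,
      Matrix.mul_assoc (P * D) P P, hP2]
  rw [h2] at h1
  exact add_eq_right.mp h1

lemma trace_crit {n : ℕ} (A P D : Matrix (Fin n) (Fin n) ℂ)
    (hP2 : P * P = P) (hcomm : A * P = P * A) (hD : D * P + P * D = D) :
    Matrix.trace (A * D) = 0 := by
  have h0 : P * D * P = 0 := pdp_zero P D hP2 hD
  have hPAP : P * (A * P) = A * P := by
    rw [hcomm, ← Matrix.mul_assoc, hP2]
  have key : Matrix.trace (A * P * D) = 0 := by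
    calc Matrix.trace (A * P * D) = Matrix.trace (P * (A * P) * D) := by rw [hPAP]
    _ = Matrix.trace (P * ((A * P) * D)) := by rw [Matrix.mul_assoc]
    _ = Matrix.trace (((A * P) * D) * P) := Matrix.trace_mul_comm _ _
    _ = Matrix.trace (A * (P * D * P)) := by
          rw [Matrix.mul_assoc (A * P) D P, Matrix.mul_assoc A P (D * P),
            ← Matrix.mul_assoc P D P]
    _ = 0 := by rw [h0, Matrix.mul_zero, Matrix.trace_zero]
  have key2 : Matrix.trace (A * (D * P)) = Matrix.trace (A * P * D) := by
    rw [← Matrix.mul_assoc, Matrix.trace_mul_cycle, ← hcomm, Matrix.mul_assoc]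
  calc Matrix.trace (A * D) = Matrix.trace (A * (D * P + P * D)) := by rw [hD]
  _ = Matrix.trace (A * (D * P)) + Matrix.trace (A * (P * D)) := by
        rw [Matrix.mul_add, Matrix.trace_add]
  _ = Matrix.trace (A * P * D) + Matrix.trace (A * P * D) := by
        rw [key2, Matrix.mul_assoc]
  _ = 0 := by rw [key, add_zero]

open NormedSpace in
lemma crit_to_comm {n : ℕ} (k : ℕ) (A P : Matrix (Fin n) (Fin n) ℂ)
    (hA : A.IsHermitian) (hP2 : P * P = P) (hPH : Pᴴ = P) (hrk : P.rank = k)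
    (hcrit : ∀ Q : ℝ → Matrix (Fin n) (Fin n) ℂ,
        (∀ i j, Differentiable ℝ fun t => Q t i j) →
        (∀ t, Q t * Q t = Q t) → (∀ t, (Q t)ᴴ = Q t) → (∀ t, (Q t).rank = k) →
        Q 0 = P →
        deriv (fun t => (Matrix.trace (A * Q t)).re) 0 = 0) :
    A * P = P * A := by
  set C : Matrix (Fin n) (Fin n) ℂ := P * A - A * P with hC
  have hCH : Cᴴ = -C := by
    rw [hC, conjTranspose_sub, conjTranspose_mul, conjTranspose_mul, hPH, hA.eq, neg_sub]
  set E : ℝ → Matrix (Fin n) (Fin n) ℂ := fun t => exp (t • C) with hE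
  set F : ℝ → Matrix (Fin n) (Fin n) ℂ := fun t => exp (t • (-C)) with hF
  have hFneg : ∀ t : ℝ, t • (-C) = -(t • C) := fun t => smul_neg t C
  have hFE : ∀ t, F t * E t = 1 := by
    intro t
    rw [hF, hE]
    simp only [hFneg]
    rw [← Matrix.exp_add_of_commute _ _ ((Commute.refl (t • C)).neg_left), neg_add_cancel, exp_zero]
  have hEF : ∀ t, E t * F t = 1 := by
    intro t
    rw [hF, hE]
    simp only [hFneg]
    rw [← Matrix.exp_add_of_commute _ _ ((Commute.refl (t • C)).neg_right), add_neg_cancel, exp_zero]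
  have hEH : ∀ t, (E t)ᴴ = F t := by
    intro t
    rw [hE, hF, ← Matrix.exp_conjTranspose]
    congr 1
    rw [conjTranspose_smul, hCH, star_trivial]
  have hFH : ∀ t, (F t)ᴴ = E t := by
    intro t
    rw [hE, hF, ← Matrix.exp_conjTranspose]
    congr 1
    rw [conjTranspose_smul, conjTranspose_neg, hCH, star_trivial, neg_neg]
  set Q : ℝ → Matrix (Fin n) (Fin n) ℂ := fun t => E t * P * F t with hQdef
  have hQ2 : ∀ t, Q t * Q t = Q t := by
    intro t
    show E t * P * F t * (E t * P * F t) = E t * P * F t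
    simp only [Matrix.mul_assoc]
    rw [← Matrix.mul_assoc (F t) (E t), hFE, Matrix.one_mul, ← Matrix.mul_assoc P P, hP2]
  have hQH : ∀ t, (Q t)ᴴ = Q t := by
    intro t
    show (E t * P * F t)ᴴ = E t * P * F t
    rw [conjTranspose_mul, conjTranspose_mul, hFH, hPH, hEH, Matrix.mul_assoc]
  have hrkQ : ∀ t, (Q t).rank = k := by
    intro t
    have hdF : IsUnit (F t).det := by
      have hdet := congrArg Matrix.det (hFE t)
      rw [Matrix.det_mul, Matrix.det_one] at hdet
      exact IsUnit.of_mul_eq_one _ hdet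
    have hdE : IsUnit (E t).det := by
      have hdet := congrArg Matrix.det (hEF t)
      rw [Matrix.det_mul, Matrix.det_one] at hdet
      exact IsUnit.of_mul_eq_one _ hdet
    show (E t * P * F t).rank = k
    rw [Matrix.rank_mul_eq_left_of_isUnit_det (F t) (E t * P) hdF,
      Matrix.rank_mul_eq_right_of_isUnit_det (E t) P hdE, hrk]
  have hE0 : E 0 = 1 := by rw [hE]; simp [exp_zero]
  have hF0 : F 0 = 1 := by rw [hF]; simp [exp_zero]
  have hQ0 : Q 0 = P := by
    show E 0 * P * F 0 = P
    rw [hE0, hF0, Matrix.one_mul, Matrix.mul_one]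
  have hE' : ∀ t : ℝ, HasDerivAt E (exp (t • C) * C) t := fun t =>
    hasDerivAt_exp_smul_const C t
  have hF' : ∀ t : ℝ, HasDerivAt F (exp (t • (-C)) * (-C)) t := fun t =>
    hasDerivAt_exp_smul_const (-C) t
  have hQ' : ∀ t : ℝ, HasDerivAt Q (exp (t • C) * C * P * F t
      + E t * P * (exp (t • (-C)) * (-C))) t := by
    intro t
    exact ((hE' t).mul_const P).mul (hF' t)
  have hQ'0 : HasDerivAt Q (C * P - P * C) 0 := by
    have h := hQ' 0
    simp only [zero_smul, exp_zero, Matrix.one_mul] at h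
    rw [hE0, hF0] at h
    simpa [Matrix.mul_one, Matrix.mul_neg, sub_eq_add_neg] using h
  have hQdiff : ∀ i j, Differentiable ℝ fun t => Q t i j := by
    intro i j t
    exact ((entryCLM n i j).differentiableAt.comp t (hQ' t).differentiableAt)
  have hQe : ∀ i j, HasDerivAt (fun t => Q t i j) ((C * P - P * C) i j) 0 := by
    intro i j
    exact (entryCLM n i j).hasFDerivAt.comp_hasDerivAt 0 hQ'0
  have htr : HasDerivAt (fun t => (Matrix.trace (A * Q t)).re)
      ((Matrix.trace (A * (C * P - P * C))).re) 0 := hasDerivAt_traceRe A Q _ hQe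
  have hz : (Matrix.trace (A * (C * P - P * C))).re = 0 := by
    rw [← htr.deriv]
    exact hcrit Q hQdiff hQ2 hQH hrkQ hQ0
  have htr2 : Matrix.trace (A * (C * P - P * C)) = Matrix.trace (C * C) := by
    rw [Matrix.mul_sub, Matrix.trace_sub, ← Matrix.mul_assoc, ← Matrix.mul_assoc,
      Matrix.trace_mul_cycle A C P, ← Matrix.trace_sub, ← Matrix.sub_mul, ← hC]
  rw [htr2] at hz
  have hterm : ∀ i j, C i j * C j i = -(Complex.normSq (C i j) : ℂ) := by
    intro i j
    have h := congrFun (congrFun hCH j) i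
    simp only [Matrix.conjTranspose_apply, Matrix.neg_apply] at h
    have h2 : C j i = -star (C i j) := by rw [h, neg_neg]
    rw [h2, mul_neg, ← Complex.mul_conj]
    rfl
  have htrace : Matrix.trace (C * C) = ∑ i, ∑ j, C i j * C j i := by
    simp [Matrix.trace, Matrix.diag, Matrix.mul_apply]
  rw [htrace] at hz
  simp only [hterm] at hz
  have hz2 : ∑ i, ∑ j, Complex.normSq (C i j) = 0 := by
    have : ((∑ i, ∑ j, -(Complex.normSq (C i j) : ℂ))).re
        = -∑ i, ∑ j, Complex.normSq (C i j) := by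
      simp [Complex.re_sum]
    rw [this] at hz
    linarith
  have hCzero : C = 0 := by
    ext i j
    have h1 := (Finset.sum_eq_zero_iff_of_nonneg (fun i _ =>
      Finset.sum_nonneg (fun j _ => Complex.normSq_nonneg (C i j)))).mp hz2 i (Finset.mem_univ i)
    have h2 := (Finset.sum_eq_zero_iff_of_nonneg (fun j _ =>
      Complex.normSq_nonneg (C i j))).mp h1 j (Finset.mem_univ j)
    simpa [Complex.normSq_eq_zero] using h2
  exact (sub_eq_zero.mp (hC ▸ hCzero)).symm

lemma diag_part {n k : ℕ} (P : Matrix (Fin n) (Fin n) ℂ)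
    (hP2 : P * P = P) (hrk : P.rank = k)
    (a : Fin n → ℝ) (ha : Function.Injective a) :
    Matrix.diagonal (fun i => (a i : ℂ)) * P = P * Matrix.diagonal (fun i => (a i : ℂ)) ↔
      ∃ I : Finset (Fin n), I.card = k ∧
        P = Matrix.diagonal (fun i => if i ∈ I then (1 : ℂ) else 0) := by
  classical
  constructor
  · intro hcomm
    have hoff : ∀ i j, i ≠ j → P i j = 0 := by
      intro i j hij
      have h := congrFun (congrFun hcomm i) j
      rw [Matrix.diagonal_mul, Matrix.mul_diagonal] at h
      have hne : (a i : ℂ) ≠ (a j : ℂ) := by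
        intro hh
        exact hij (ha (by exact_mod_cast hh))
      have h2 : ((a i : ℂ) - a j) * P i j = 0 := by linear_combination h
      rcases mul_eq_zero.mp h2 with h' | h'
      · exact absurd (sub_eq_zero.mp h') hne
      · exact h'
    have hdiagv : ∀ i, P i i = 0 ∨ P i i = 1 := by
      intro i
      have h := congrFun (congrFun hP2 i) i
      rw [Matrix.mul_apply] at h
      rw [Finset.sum_eq_single i (fun l _ hl => by rw [hoff i l (Ne.symm hl), zero_mul])
        (fun hl => absurd (Finset.mem_univ i) hl)] at h
      have h2 : P i i * (P i i - 1) = 0 := by linear_combination h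
      rcases mul_eq_zero.mp h2 with h' | h'
      · exact Or.inl h'
      · exact Or.inr (by linear_combination h')
    set I : Finset (Fin n) := Finset.univ.filter (fun i => P i i = 1) with hI
    have hPdiag : P = Matrix.diagonal (fun i => if i ∈ I then (1 : ℂ) else 0) := by
      ext i j
      by_cases hij : i = j
      · subst hij
        rw [Matrix.diagonal_apply_eq]
        rcases hdiagv i with h | h
        · rw [h, if_neg]
          simp only [hI, Finset.mem_filter, Finset.mem_univ, true_and]
          rw [h]; exact zero_ne_one
        · rw [h, if_pos]
          simp only [hI, Finset.mem_filter, Finset.mem_univ, true_and]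
          exact h
      · rw [Matrix.diagonal_apply_ne _ hij, hoff i j hij]
    refine ⟨I, ?_, hPdiag⟩
    rw [hPdiag, Matrix.rank_diagonal] at hrk
    rw [← hrk, Fintype.card_subtype]
    congr 1
    ext i
    by_cases h : i ∈ I <;> simp [h]
  · rintro ⟨I, hcard, rfl⟩
    rw [Matrix.diagonal_mul_diagonal, Matrix.diagonal_mul_diagonal]
    exact congrArg Matrix.diagonal (funext fun i => mul_comm _ _)

end Aux

/-- Criticality of `P ↦ Re Tr(A P)` on the manifold of rank-`k` Hermitian
projections: `P` is a critical point iff `A P = P A`; and for `A = diag(a)` with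
`a` injective this happens iff `P` is the orthogonal projection onto a
coordinate `k`-plane `span {eᵢ : i ∈ I}`. -/
theorem stmt4 (n k : ℕ) (A P : Matrix (Fin n) (Fin n) ℂ)
    (hA : A.IsHermitian) (hP2 : P * P = P) (hPH : Pᴴ = P) (hrk : P.rank = k) :
    ((∀ Q : ℝ → Matrix (Fin n) (Fin n) ℂ,
        (∀ i j, Differentiable ℝ fun t => Q t i j) →
        (∀ t, Q t * Q t = Q t) → (∀ t, (Q t)ᴴ = Q t) → (∀ t, (Q t).rank = k) →
        Q 0 = P →
        deriv (fun t => (Matrix.trace (A * Q t)).re) 0 = 0) ↔ A * P = P * A) ∧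
    (∀ a : Fin n → ℝ, Function.Injective a → A = Matrix.diagonal (fun i => (a i : ℂ)) →
      (A * P = P * A ↔ ∃ I : Finset (Fin n), I.card = k ∧
        P = Matrix.diagonal (fun i => if i ∈ I then (1 : ℂ) else 0))) := by
  constructor
  · constructor
    · exact fun hcrit => crit_to_comm k A P hA hP2 hPH hrk hcrit
    · intro hcomm Q hQdiff hQ2 hQH hrkQ hQ0
      have hQe : ∀ i j, HasDerivAt (fun t => Q t i j)
          ((Matrix.of fun i j => deriv (fun t => Q t i j) 0) i j) 0 :=
        fun i j => (hQdiff i j 0).hasDerivAt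
      have hD := tangent_rel Q P _ hQe hQ2 hQ0
      have htz := trace_crit A P _ hP2 hcomm hD
      rw [(hasDerivAt_traceRe A Q _ hQe).deriv, htz, Complex.zero_re]
  · intro a ha hAdiag
    subst hAdiag
    exact diag_part P hP2 hrk a ha
end

section
/- Let A be an n×n Hermitian complex matrix, let V ⊆ ℂ^n be a k-dimensional subspace, and let Q(t) denote the matrix of the orthogonal projection of ℂ^n onto exp(−tA)·V. Then t ↦ Q(t) is differentiable and satisfies, for all t ∈ ℝ, the double-bracket equation Q'(t) = −( Q(t) A (I − Q(t)) + (I − Q(t)) A Q(t) ) = −[Q(t), [Q(t), A]]. -/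
open Matrix

namespace Stmt5Aux
open NormedSpace
open scoped ComplexOrder

variable {n : ℕ}

noncomputable def Ee (A : Matrix (Fin n) (Fin n) ℂ) (s : ℝ) : Matrix (Fin n) (Fin n) ℂ :=
  NormedSpace.exp ((-s : ℂ) • A)

variable (A P : Matrix (Fin n) (Fin n) ℂ)

lemma Ee_herm (hA : A.IsHermitian) (s : ℝ) : (Ee A s)ᴴ = Ee A s := by
  rw [Ee, ← Matrix.exp_conjTranspose, conjTranspose_smul, hA.eq]
  congr 1
  simp

lemma commute_A_Ee (s : ℝ) : Commute A (Ee A s) :=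
  ((Commute.refl A).smul_right _).exp_right

lemma Ee_mul (s t : ℝ) : Ee A s * Ee A t = Ee A (s + t) := by
  rw [Ee, Ee, Ee, ← Matrix.exp_add_of_commute]
  · congr 1
    push_cast
    rw [← add_smul]
    ring_nf
  · exact ((Commute.refl A).smul_right _).smul_left _

lemma Ee_zero : Ee A 0 = 1 := by
  simp [Ee, NormedSpace.exp_zero]

lemma Ee_neg_mul (s : ℝ) : Ee A (-s) * Ee A s = 1 := by
  rw [Ee_mul]; simp [Ee_zero]

lemma Ee_mul_neg (s : ℝ) : Ee A s * Ee A (-s) = 1 := by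
  rw [Ee_mul]; simp [Ee_zero]

lemma Ee_isUnit (s : ℝ) : IsUnit (Ee A s) :=
  isUnit_iff_exists.2 ⟨Ee A (-s), Ee_mul_neg A s, Ee_neg_mul A s⟩

noncomputable def Ss (A P : Matrix (Fin n) (Fin n) ℂ) (s : ℝ) : Matrix (Fin n) (Fin n) ℂ :=
  P * (Ee A s * Ee A s) * P + (1 - P)

noncomputable def Gg (A P : Matrix (Fin n) (Fin n) ℂ) (s : ℝ) : Matrix (Fin n) (Fin n) ℂ :=
  Ee A s * P * ((Ss A P s)⁻¹ * (P * Ee A s))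

lemma Ss_herm (hA : A.IsHermitian) (hPh : Pᴴ = P) (s : ℝ) : (Ss A P s)ᴴ = Ss A P s := by
  simp [Ss, conjTranspose_mul, conjTranspose_add, conjTranspose_sub, hPh,
    Ee_herm A hA, mul_assoc]

lemma Ss_P_comm (hP : P * P = P) (s : ℝ) : Ss A P s * P = P * Ss A P s := by
  simp only [Ss, add_mul, mul_add, sub_mul, mul_sub, one_mul, mul_one, hP, mul_assoc]
  rw [← mul_assoc P P, hP]

lemma Ss_mul_P (hP : P * P = P) (s : ℝ) : Ss A P s * P = P * (Ee A s * Ee A s) * P := by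
  simp only [Ss, add_mul, sub_mul, one_mul, mul_assoc, hP]
  simp [← mul_assoc P P, hP, mul_assoc]

lemma P_mul_Ss (hP : P * P = P) (s : ℝ) : P * Ss A P s = P * (Ee A s * Ee A s) * P := by
  simp only [Ss, mul_add, mul_sub, mul_one, mul_assoc]
  simp [← mul_assoc P P, hP, mul_assoc]

lemma Ss_isUnit (hA : A.IsHermitian) (hP : P * P = P) (hPh : Pᴴ = P) (s : ℝ) :
    IsUnit (Ss A P s) := by
  rw [← Matrix.mulVec_injective_iff_isUnit]
  have h0 : ∀ x, (Ss A P s).mulVec x = 0 → x = 0 := by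
    intro x hx
    have h1 : (P * (Ee A s * Ee A s) * P).mulVec x = 0 := by
      rw [← P_mul_Ss A P hP, ← Matrix.mulVec_mulVec, hx, Matrix.mulVec_zero]
    have h2 : (Ee A s * P).mulVec x = 0 := by
      have hEP : (Ee A s * P)ᴴ * (Ee A s * P) = P * (Ee A s * Ee A s) * P := by
        rw [conjTranspose_mul, hPh, Ee_herm A hA]
        simp [mul_assoc]
      have key : star ((Ee A s * P).mulVec x) ⬝ᵥ ((Ee A s * P).mulVec x) = 0 := by
        have e1 : star ((Ee A s * P).mulVec x) ⬝ᵥ ((Ee A s * P).mulVec x)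
            = star x ⬝ᵥ (((Ee A s * P)ᴴ * (Ee A s * P)).mulVec x) := by
          rw [Matrix.star_mulVec, Matrix.dotProduct_mulVec, Matrix.dotProduct_mulVec,
            Matrix.vecMul_vecMul]
        rw [e1, hEP, h1, dotProduct_zero]
      exact dotProduct_star_self_eq_zero.mp key
    have h3 : P.mulVec x = 0 := by
      have hinj : Function.Injective (Ee A s).mulVec :=
        Matrix.mulVec_injective_iff_isUnit.mpr (Ee_isUnit A s)
      apply hinj
      rw [Matrix.mulVec_mulVec, h2, Matrix.mulVec_zero]
    rw [Ss, Matrix.add_mulVec, Matrix.sub_mulVec, Matrix.one_mulVec, h1, h3] at hx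
    simpa using hx
  intro x y hxy
  have := h0 (x - y) (by rw [Matrix.mulVec_sub, hxy, sub_self])
  exact sub_eq_zero.mp this

lemma Ss_mul_inv (hA : A.IsHermitian) (hP : P * P = P) (hPh : Pᴴ = P) (s : ℝ) :
    Ss A P s * (Ss A P s)⁻¹ = 1 :=
  Matrix.mul_nonsing_inv _ ((Matrix.isUnit_iff_isUnit_det _).mp (Ss_isUnit A P hA hP hPh s))

lemma Ss_inv_mul (hA : A.IsHermitian) (hP : P * P = P) (hPh : Pᴴ = P) (s : ℝ) :
    (Ss A P s)⁻¹ * Ss A P s = 1 :=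
  Matrix.nonsing_inv_mul _ ((Matrix.isUnit_iff_isUnit_det _).mp (Ss_isUnit A P hA hP hPh s))

lemma Sinv_P_comm (hA : A.IsHermitian) (hP : P * P = P) (hPh : Pᴴ = P) (s : ℝ) :
    P * (Ss A P s)⁻¹ = (Ss A P s)⁻¹ * P := by
  calc P * (Ss A P s)⁻¹
      = ((Ss A P s)⁻¹ * Ss A P s) * (P * (Ss A P s)⁻¹) := by
        rw [Ss_inv_mul A P hA hP hPh, one_mul]
    _ = (Ss A P s)⁻¹ * ((Ss A P s * P) * (Ss A P s)⁻¹) := by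
        simp only [mul_assoc]
    _ = (Ss A P s)⁻¹ * (P * (Ss A P s * (Ss A P s)⁻¹)) := by
        rw [Ss_P_comm A P hP, mul_assoc]
    _ = (Ss A P s)⁻¹ * P := by rw [Ss_mul_inv A P hA hP hPh, mul_one]

lemma Sinv_herm (hA : A.IsHermitian) (hP : P * P = P) (hPh : Pᴴ = P) (s : ℝ) :
    ((Ss A P s)⁻¹)ᴴ = (Ss A P s)⁻¹ := by
  rw [Matrix.conjTranspose_nonsing_inv, Ss_herm A P hA hPh]

lemma Gg_herm (hA : A.IsHermitian) (hP : P * P = P) (hPh : Pᴴ = P) (s : ℝ) :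
    (Gg A P s)ᴴ = Gg A P s := by
  simp only [Gg, conjTranspose_mul, Ee_herm A hA, hPh, Sinv_herm A P hA hP hPh, mul_assoc]

lemma Gg_mul_EP (hA : A.IsHermitian) (hP : P * P = P) (hPh : Pᴴ = P) (s : ℝ) :
    Gg A P s * (Ee A s * P) = Ee A s * P := by
  have h1 : P * Ee A s * (Ee A s * P) = Ss A P s * P := by
    rw [Ss_mul_P A P hP]
    simp only [mul_assoc]
  calc Gg A P s * (Ee A s * P)
      = Ee A s * P * ((Ss A P s)⁻¹ * (P * Ee A s * (Ee A s * P))) := by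
        simp only [Gg, mul_assoc]
    _ = Ee A s * P * ((Ss A P s)⁻¹ * (Ss A P s * P)) := by rw [h1]
    _ = Ee A s * P * (((Ss A P s)⁻¹ * Ss A P s) * P) := by simp only [mul_assoc]
    _ = Ee A s * (P * P) := by
        rw [Ss_inv_mul A P hA hP hPh, one_mul, mul_assoc]
    _ = Ee A s * P := by rw [hP]

lemma Gg_idem (hA : A.IsHermitian) (hP : P * P = P) (hPh : Pᴴ = P) (s : ℝ) :
    Gg A P s * Gg A P s = Gg A P s := by
  nth_rewrite 2 [Gg]
  rw [← mul_assoc, Gg_mul_EP A P hA hP hPh s, Gg]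

lemma Gg_range (hA : A.IsHermitian) (hP : P * P = P) (hPh : Pᴴ = P) (s : ℝ) :
    LinearMap.range (Gg A P s).mulVecLin = LinearMap.range (Ee A s * P).mulVecLin := by
  apply le_antisymm
  · rintro z ⟨x, rfl⟩
    refine ⟨((Ss A P s)⁻¹ * (P * Ee A s)).mulVec x, ?_⟩
    simp only [Matrix.mulVecLin_apply]
    rw [Matrix.mulVec_mulVec]
    rfl
  · rintro z ⟨x, rfl⟩
    refine ⟨(Ee A s * P).mulVec x, ?_⟩
    simp only [Matrix.mulVecLin_apply]
    rw [Matrix.mulVec_mulVec, Gg_mul_EP A P hA hP hPh s]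

lemma mul_eq_of_range_le {R S : Matrix (Fin n) (Fin n) ℂ} (hR : R * R = R)
    (hr : LinearMap.range S.mulVecLin ≤ LinearMap.range R.mulVecLin) : R * S = S := by
  have h : ∀ x, (R * S).mulVec x = S.mulVec x := by
    intro x
    obtain ⟨y, hy⟩ := hr (LinearMap.mem_range_self S.mulVecLin x)
    have hy' : R.mulVec y = S.mulVec x := hy
    rw [← Matrix.mulVec_mulVec, ← hy', Matrix.mulVec_mulVec, hR, hy']
  ext i j
  have := congrFun (h (Pi.single j 1)) i
  rwa [Matrix.mulVec_single_one, Matrix.mulVec_single_one] at this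

lemma proj_unique {Q₁ Q₂ : Matrix (Fin n) (Fin n) ℂ} (h1i : Q₁ * Q₁ = Q₁)
    (h1h : Q₁ᴴ = Q₁) (h2i : Q₂ * Q₂ = Q₂) (h2h : Q₂ᴴ = Q₂)
    (hr : LinearMap.range Q₁.mulVecLin = LinearMap.range Q₂.mulVecLin) : Q₁ = Q₂ := by
  have e1 : Q₁ * Q₂ = Q₂ := mul_eq_of_range_le h1i hr.ge
  have e2 : Q₂ * Q₁ = Q₁ := mul_eq_of_range_le h2i hr.le
  have e3 : Q₂ * Q₁ = Q₂ := by
    have := congrArg conjTranspose e1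
    rwa [conjTranspose_mul, h1h, h2h] at this
  rw [← e2, e3]


section Linfty

attribute [local instance] Matrix.linftyOpSemiNormedRing Matrix.linftyOpNormedRing
  Matrix.linftyOpNormedAlgebra

lemma Ee_eq_exp_real (s : ℝ) : Ee A s = NormedSpace.exp (s • (-A)) := by
  rw [Ee]
  congr 1
  rw [← Complex.ofReal_neg, Complex.coe_smul, neg_smul, smul_neg]

lemma hasDerivAt_Ee (t : ℝ) : HasDerivAt (Ee A) (Ee A t * (-A)) t := by
  have h := hasDerivAt_exp_smul_const (𝕂 := ℝ) (-A) t
  have hfun : Ee A = fun u : ℝ => NormedSpace.exp (u • (-A)) := funext (Ee_eq_exp_real A)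
  rw [hfun]
  exact h

lemma hasDerivAt_Ss (t : ℝ) :
    HasDerivAt (Ss A P)
      (P * (Ee A t * (-A) * Ee A t + Ee A t * (Ee A t * (-A))) * P) t := by
  have hE := hasDerivAt_Ee A t
  have h1 : HasDerivAt (fun s => Ee A s * Ee A s)
      (Ee A t * (-A) * Ee A t + Ee A t * (Ee A t * (-A))) t := hE.mul hE
  have h2 := ((h1.const_mul P).mul_const P).add_const (1 - P)
  exact h2

lemma hasDerivAt_Sinv (hA : A.IsHermitian) (hP : P * P = P) (hPh : Pᴴ = P)
    {DS : Matrix (Fin n) (Fin n) ℂ} {t : ℝ} (hS : HasDerivAt (Ss A P) DS t) :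
    HasDerivAt (fun s => (Ss A P s)⁻¹)
      (-((Ss A P t)⁻¹ * DS * (Ss A P t)⁻¹)) t := by
  have hu : IsUnit (Ss A P t) := Ss_isUnit A P hA hP hPh t
  have h1 := hasFDerivAt_ringInverse (𝕜 := ℝ) hu.unit
  rw [hu.unit_spec] at h1
  have h2 := h1.comp_hasDerivAt t hS
  have hfun : (fun s => (Ss A P s)⁻¹) = fun s => Ring.inverse (Ss A P s) :=
    funext fun s => Matrix.nonsing_inv_eq_ringInverse _
  rw [hfun]
  refine h2.congr_deriv ?_
  simp only [ContinuousLinearMap.neg_apply, ContinuousLinearMap.mulLeftRight_apply]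
  rw [Matrix.coe_units_inv, hu.unit_spec]

lemma hasDerivAt_Gg (hA : A.IsHermitian) (hP : P * P = P) (hPh : Pᴴ = P) (t : ℝ) :
    HasDerivAt (Gg A P)
      (-(Gg A P t * A * (1 - Gg A P t) + (1 - Gg A P t) * A * Gg A P t)) t := by
  have hE := hasDerivAt_Ee A t
  have hS := hasDerivAt_Ss A P t
  have hT := hasDerivAt_Sinv A P hA hP hPh hS
  have hG : HasDerivAt (fun s => Ee A s * P * ((Ss A P s)⁻¹ * (P * Ee A s)))
      ((Ee A t * (-A) * P) * ((Ss A P t)⁻¹ * (P * Ee A t)) +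
        (Ee A t * P) *
          ((-((Ss A P t)⁻¹ * (P * (Ee A t * (-A) * Ee A t + Ee A t * (Ee A t * (-A))) * P) *
              (Ss A P t)⁻¹)) * (P * Ee A t) +
            (Ss A P t)⁻¹ * (P * (Ee A t * (-A))))) t :=
    (hE.mul_const P).mul (hT.mul (hE.const_mul P))
  have hG' : HasDerivAt (Gg A P) _ t := hG
  convert hG' using 1
  have hc : A * Ee A t = Ee A t * A := (commute_A_Ee A t).eq
  have hc' : ∀ X, A * (Ee A t * X) = Ee A t * (A * X) := fun X => by
    rw [← mul_assoc, hc, mul_assoc]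
  simp only [Gg, mul_sub, sub_mul, mul_add, add_mul, mul_one, one_mul, mul_neg, neg_mul,
    neg_add, neg_neg, neg_sub, mul_assoc]
  simp only [hc', hc]
  abel

lemma hasDerivAt_Gg_entry (hA : A.IsHermitian) (hP : P * P = P) (hPh : Pᴴ = P)
    (t : ℝ) (i j : Fin n) :
    HasDerivAt (fun s => Gg A P s i j)
      ((-(Gg A P t * A * (1 - Gg A P t) + (1 - Gg A P t) * A * Gg A P t)) i j) t := by
  let L : Matrix (Fin n) (Fin n) ℂ →ₗ[ℝ] ℂ :=
    { toFun := fun M => M i j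
      map_add' := fun _ _ => rfl
      map_smul' := fun _ _ => rfl }
  exact L.toContinuousLinearMap.hasFDerivAt.comp_hasDerivAt t (hasDerivAt_Gg A P hA hP hPh t)

end Linfty
end Stmt5Aux

open Stmt5Aux

attribute [local instance] Matrix.normedAddCommGroup Matrix.normedSpace

/-- If `Q t` is the matrix of the orthogonal projection of `ℂⁿ` onto
`exp(−tA)·V` (characterized as the Hermitian idempotent matrix with column space
`exp(−tA)·V`), for `A` Hermitian and `V` a `k`-dimensional subspace, then
`t ↦ Q t` is differentiable and satisfies the double-bracket equation
`Q' = −(Q A (1−Q) + (1−Q) A Q) = −[Q,[Q,A]]`. -/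
theorem stmt5 (n k : ℕ) (A : Matrix (Fin n) (Fin n) ℂ) (hA : A.IsHermitian)
    (V : Submodule ℂ (Fin n → ℂ)) (hV : Module.finrank ℂ V = k)
    (Q : ℝ → Matrix (Fin n) (Fin n) ℂ)
    (hQidem : ∀ t, Q t * Q t = Q t) (hQherm : ∀ t, (Q t)ᴴ = Q t)
    (hQrange : ∀ t : ℝ, LinearMap.range (Q t).mulVecLin =
      V.map (NormedSpace.exp ((-t : ℂ) • A)).mulVecLin) :
    ∀ t : ℝ,
      HasDerivAt Q (-(Q t * A * (1 - Q t) + (1 - Q t) * A * Q t)) t ∧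
      -(Q t * A * (1 - Q t) + (1 - Q t) * A * Q t) =
        -(Q t * (Q t * A - A * Q t) - (Q t * A - A * Q t) * Q t) := by

  have hP : Q 0 * Q 0 = Q 0 := hQidem 0
  have hPh : (Q 0)ᴴ = Q 0 := hQherm 0
  have hrangeP : LinearMap.range (Q 0).mulVecLin = V := by
    have h := hQrange 0
    simpa using h
  have hQG : ∀ s, Q s = Gg A (Q 0) s := by
    intro s
    apply proj_unique (hQidem s) (hQherm s) (Gg_idem A (Q 0) hA hP hPh s)
      (Gg_herm A (Q 0) hA hP hPh s)
    rw [hQrange s, Gg_range A (Q 0) hA hP hPh s, Matrix.mulVecLin_mul,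
      LinearMap.range_comp, hrangeP]
    rfl
  intro t
  constructor
  · have key : ∀ i j, HasDerivAt (fun s => Q s i j)
        ((-(Q t * A * (1 - Q t) + (1 - Q t) * A * Q t)) i j) t := by
      intro i j
      have h := hasDerivAt_Gg_entry A (Q 0) hA hP hPh t i j
      have hfun : (fun s => Q s i j) = fun s => Gg A (Q 0) s i j :=
        funext fun s => by rw [hQG s]
      rw [hfun, hQG t]
      exact h
    exact hasDerivAt_pi.2 fun i => hasDerivAt_pi.2 fun j => key i j
  · have h := hQidem t
    have hc : ∀ X, Q t * (Q t * X) = Q t * X := fun X => by rw [← mul_assoc, h]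
    simp only [mul_sub, sub_mul, mul_add, add_mul, mul_one, one_mul, mul_assoc, hc, h]
    abel
end

section
/- Let A be an n×n Hermitian complex matrix, V ⊆ ℂ^n a k-dimensional subspace, and Q(t) the matrix of the orthogonal projection of ℂ^n onto exp(−tA)·V. Then for every t ∈ ℝ, d/dt Re Tr(A Q(t)) = −‖A Q(t) − Q(t) A‖_F² ≤ 0, where ‖M‖_F² = Re Tr(M Mᴴ) is the squared Frobenius norm; in particular the derivative vanishes at t if and only if A Q(t) = Q(t) A. -/
open Matrix

namespace Stmt6Aux

open scoped ComplexOrder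

variable {n : ℕ}

private lemma ext_mulVec {A B : Matrix (Fin n) (Fin n) ℂ}
    (h : ∀ x, A *ᵥ x = B *ᵥ x) : A = B := by
  ext i j
  simpa using congr_fun (h (Pi.single j 1)) i

private lemma fix_of_mem_range {P : Matrix (Fin n) (Fin n) ℂ} (hP : P * P = P)
    {x : Fin n → ℂ} (hx : x ∈ LinearMap.range P.mulVecLin) : P *ᵥ x = x := by
  obtain ⟨y, rfl⟩ := hx
  simp only [mulVecLin_apply, mulVec_mulVec, hP]

private lemma proj_unique {P R : Matrix (Fin n) (Fin n) ℂ}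
    (hPi : P * P = P) (hPh : Pᴴ = P) (hRi : R * R = R) (hRh : Rᴴ = R)
    (hr : LinearMap.range P.mulVecLin = LinearMap.range R.mulVecLin) : P = R := by
  have h1 : P * R = R := ext_mulVec fun x => by
    rw [← mulVec_mulVec]
    exact fix_of_mem_range hPi (hr ▸ ⟨x, rfl⟩)
  have h2 : R * P = P := ext_mulVec fun x => by
    rw [← mulVec_mulVec]
    exact fix_of_mem_range hRi (hr ▸ ⟨x, rfl⟩)
  calc P = Pᴴ := hPh.symm
    _ = (R * P)ᴴ := by rw [h2]
    _ = Pᴴ * Rᴴ := by rw [conjTranspose_mul]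
    _ = P * R := by rw [hPh, hRh]
    _ = R := h1

private lemma isUnit_S {E P : Matrix (Fin n) (Fin n) ℂ} (hE : IsUnit E) (hEh : Eᴴ = E)
    (hPi : P * P = P) (hPh : Pᴴ = P) :
    IsUnit (P * (E * E) * P + (1 - P)) := by
  set S := P * (E * E) * P + (1 - P) with hSdef
  have hS : S = (E * P)ᴴ * (E * P) + (1 - P)ᴴ * (1 - P) := by
    rw [conjTranspose_mul, hEh, hPh, conjTranspose_sub, conjTranspose_one, hPh]
    have h1P : (1 - P) * (1 - P) = 1 - P := by
      simp only [mul_sub, sub_mul, mul_one, one_mul, hPi]; abel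
    rw [h1P, hSdef]
    noncomm_ring
  rw [← Matrix.mulVec_injective_iff_isUnit]
  have key : ∀ z, S *ᵥ z = 0 → z = 0 := by
    intro z hz
    have h0 : star z ⬝ᵥ (S *ᵥ z) = 0 := by rw [hz, dotProduct_zero]
    have quad : ∀ (B : Matrix (Fin n) (Fin n) ℂ) (w : Fin n → ℂ),
        star w ⬝ᵥ ((Bᴴ * B) *ᵥ w) = star (B *ᵥ w) ⬝ᵥ (B *ᵥ w) := fun B w => by
      rw [← mulVec_mulVec, dotProduct_mulVec, ← star_mulVec]
    rw [hS, add_mulVec, dotProduct_add, quad, quad] at h0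
    have hnn1 := dotProduct_star_self_nonneg ((E * P) *ᵥ z)
    have hnn2 := dotProduct_star_self_nonneg ((1 - P) *ᵥ z)
    obtain ⟨hM, hN⟩ := (add_eq_zero_iff_of_nonneg hnn1 hnn2).mp h0
    have hMz : (E * P) *ᵥ z = 0 := dotProduct_star_self_eq_zero.mp hM
    have hNz : (1 - P) *ᵥ z = 0 := dotProduct_star_self_eq_zero.mp hN
    have hPz : P *ᵥ z = z := by
      rw [sub_mulVec, one_mulVec, sub_eq_zero] at hNz
      exact hNz.symm
    have : E *ᵥ z = 0 := by rw [← hPz, mulVec_mulVec]; exact hMz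
    have hinj := Matrix.mulVec_injective_iff_isUnit.mpr hE
    have := hinj (a₁ := z) (a₂ := 0) (by rw [this, mulVec_zero])
    exact this
  intro x y hxy
  have : S *ᵥ (x - y) = 0 := by rw [mulVec_sub, hxy, sub_self]
  exact sub_eq_zero.mp (key _ this)

noncomputable def Efun (A : Matrix (Fin n) (Fin n) ℂ) (s : ℝ) : Matrix (Fin n) (Fin n) ℂ :=
  NormedSpace.exp ((-s : ℂ) • A)

noncomputable def Sfun (A P : Matrix (Fin n) (Fin n) ℂ) (s : ℝ) : Matrix (Fin n) (Fin n) ℂ :=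
  P * (Efun A s * Efun A s) * P + (1 - P)

noncomputable def Rfun (A P : Matrix (Fin n) (Fin n) ℂ) (s : ℝ) : Matrix (Fin n) (Fin n) ℂ :=
  Efun A s * P * (Sfun A P s)⁻¹ * (P * Efun A s)

private lemma Efun_zero (A : Matrix (Fin n) (Fin n) ℂ) : Efun A 0 = 1 := by
  simp [Efun, NormedSpace.exp_zero]

private lemma Efun_herm {A : Matrix (Fin n) (Fin n) ℂ} (hA : Aᴴ = A) (s : ℝ) :
    (Efun A s)ᴴ = Efun A s := by
  rw [Efun, ← Matrix.exp_conjTranspose]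
  congr 1
  rw [conjTranspose_smul, hA]
  norm_num

private lemma Efun_isUnit (A : Matrix (Fin n) (Fin n) ℂ) (s : ℝ) : IsUnit (Efun A s) :=
  Matrix.isUnit_exp _

private lemma Efun_mul (A : Matrix (Fin n) (Fin n) ℂ) (s u : ℝ) :
    Efun A s * Efun A u = Efun A (s + u) := by
  have h : (-(↑(s + u)) : ℂ) • A = (-s : ℂ) • A + (-u : ℂ) • A := by
    push_cast; module
  rw [Efun, Efun, Efun, h]
  exact (Matrix.exp_add_of_commute _ _ (((Commute.refl A).smul_left _).smul_right _)).symm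

private lemma Efun_commA (A : Matrix (Fin n) (Fin n) ℂ) (s : ℝ) :
    Commute A (Efun A s) :=
  ((Commute.refl A).smul_right _).exp_right

section Props

variable {A P : Matrix (Fin n) (Fin n) ℂ}

private lemma hP2 (hPi : P * P = P) : ∀ X : Matrix (Fin n) (Fin n) ℂ,
    P * (P * X) = P * X := fun X => by rw [← mul_assoc, hPi]

private lemma Sfun_isUnit (hA : Aᴴ = A) (hPi : P * P = P) (hPh : Pᴴ = P) (s : ℝ) :
    IsUnit (Sfun A P s) :=
  isUnit_S (Efun_isUnit A s) (Efun_herm hA s) hPi hPh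

private lemma Sfun_commP (hPi : P * P = P) (s : ℝ) :
    P * Sfun A P s = Sfun A P s * P := by
  simp only [Sfun, mul_add, add_mul, mul_sub, sub_mul, mul_one, one_mul, mul_assoc,
    hPi, hP2 hPi]

private lemma comm_inv {P S T : Matrix (Fin n) (Fin n) ℂ}
    (hTS : T * S = 1) (hST : S * T = 1) (hc : P * S = S * P) : P * T = T * P := by
  calc P * T = T * S * P * T := by rw [hTS, one_mul]
    _ = T * (P * S) * T := by rw [mul_assoc T S P, hc]
    _ = T * P * (S * T) := by noncomm_ring
    _ = T * P := by rw [hST, mul_one]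

private lemma Sdet (hA : Aᴴ = A) (hPi : P * P = P) (hPh : Pᴴ = P) (s : ℝ) :
    IsUnit (Sfun A P s).det := by
  rw [← Matrix.isUnit_iff_isUnit_det]; exact Sfun_isUnit hA hPi hPh s

private lemma Sinv_commP (hA : Aᴴ = A) (hPi : P * P = P) (hPh : Pᴴ = P) (s : ℝ) :
    P * (Sfun A P s)⁻¹ = (Sfun A P s)⁻¹ * P :=
  comm_inv (Matrix.nonsing_inv_mul _ (Sdet hA hPi hPh s))
    (Matrix.mul_nonsing_inv _ (Sdet hA hPi hPh s)) (Sfun_commP hPi s)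

private lemma Sfun_herm (hA : Aᴴ = A) (hPh : Pᴴ = P) (s : ℝ) :
    (Sfun A P s)ᴴ = Sfun A P s := by
  simp only [Sfun, conjTranspose_add, conjTranspose_sub, conjTranspose_mul,
    conjTranspose_one, hPh, Efun_herm hA]
  noncomm_ring

private lemma Sinv_herm (hA : Aᴴ = A) (hPh : Pᴴ = P) (s : ℝ) :
    ((Sfun A P s)⁻¹)ᴴ = (Sfun A P s)⁻¹ := by
  rw [Matrix.conjTranspose_nonsing_inv, Sfun_herm hA hPh]

private lemma Rfun_herm (hA : Aᴴ = A) (hPh : Pᴴ = P) (s : ℝ) :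
    (Rfun A P s)ᴴ = Rfun A P s := by
  simp only [Rfun, conjTranspose_mul, hPh, Efun_herm hA, Sinv_herm hA hPh]
  noncomm_ring

private lemma idem_aux {e P S T : Matrix (Fin n) (Fin n) ℂ} (hPi : P * P = P)
    (hts : T * S = 1) (hpt : P * T = T * P) (hps : P * S = S * P)
    (hm : P * (e * e) * P = S - 1 + P) :
    e * P * T * (P * e) * (e * P * T * (P * e)) = e * P * T * (P * e) := by
  have hTS : ∀ X : Matrix (Fin n) (Fin n) ℂ, T * (S * X) = X := fun X => by
    rw [← mul_assoc, hts, one_mul]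
  have hPT : ∀ X : Matrix (Fin n) (Fin n) ℂ, P * (T * X) = T * (P * X) := fun X => by
    rw [← mul_assoc, hpt, mul_assoc]
  have hPS : ∀ X : Matrix (Fin n) (Fin n) ℂ, P * (S * X) = S * (P * X) := fun X => by
    rw [← mul_assoc, hps, mul_assoc]
  have hmid : ∀ X : Matrix (Fin n) (Fin n) ℂ,
      P * (e * (e * (P * X))) = S * X - X + P * X := by
    intro X
    have h1 : P * (e * (e * (P * X))) = (P * (e * e) * P) * X := by noncomm_ring
    rw [h1, hm, add_mul, sub_mul, one_mul]
  simp only [mul_assoc]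
  rw [hmid]
  simp only [mul_sub, mul_add, hTS, hPT, hPS, hP2 hPi]
  abel

private lemma Rfun_idem (hA : Aᴴ = A) (hPi : P * P = P) (hPh : Pᴴ = P) (s : ℝ) :
    Rfun A P s * Rfun A P s = Rfun A P s := by
  refine idem_aux hPi (Matrix.nonsing_inv_mul _ (Sdet hA hPi hPh s))
    (Sinv_commP hA hPi hPh s) (Sfun_commP hPi s) ?_
  rw [Sfun]; abel

end Props

section Range

variable {A P : Matrix (Fin n) (Fin n) ℂ}

private lemma Rfun_fix (hA : Aᴴ = A) (hPi : P * P = P) (hPh : Pᴴ = P) (s : ℝ)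
    {v : Fin n → ℂ} (hv : P *ᵥ v = v) :
    Rfun A P s *ᵥ (Efun A s *ᵥ v) = Efun A s *ᵥ v := by
  have hd := Sdet hA hPi hPh s
  have h1 : (P * (Efun A s * Efun A s)) *ᵥ v = Sfun A P s *ᵥ v := by
    conv_lhs => rw [← hv, mulVec_mulVec]
    rw [Sfun, add_mulVec, sub_mulVec, one_mulVec, hv, sub_self, add_zero, ← mul_assoc]
  calc Rfun A P s *ᵥ (Efun A s *ᵥ v)
      = (Efun A s * (P * ((Sfun A P s)⁻¹ * (P * (Efun A s * Efun A s))))) *ᵥ v := by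
        rw [mulVec_mulVec]; congr 1; rw [Rfun]; noncomm_ring
    _ = Efun A s *ᵥ (P *ᵥ ((Sfun A P s)⁻¹ *ᵥ ((P * (Efun A s * Efun A s)) *ᵥ v))) := by
        rw [← mulVec_mulVec, ← mulVec_mulVec, ← mulVec_mulVec]
    _ = Efun A s *ᵥ v := by
        rw [h1, mulVec_mulVec v (Sfun A P s)⁻¹ (Sfun A P s),
          Matrix.nonsing_inv_mul _ hd, one_mulVec, hv]

private lemma Rfun_range (hA : Aᴴ = A) (hPi : P * P = P) (hPh : Pᴴ = P) (s : ℝ) :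
    LinearMap.range (Rfun A P s).mulVecLin
      = (LinearMap.range P.mulVecLin).map (Efun A s).mulVecLin := by
  apply le_antisymm
  · rintro y ⟨x, rfl⟩
    refine ⟨P *ᵥ (((Sfun A P s)⁻¹ * (P * Efun A s)) *ᵥ x), ⟨_, rfl⟩, ?_⟩
    simp only [mulVecLin_apply, mulVec_mulVec]
    rw [Rfun]
    noncomm_ring
  · rintro y ⟨v, hv, rfl⟩
    have hfix : P *ᵥ v = v := fix_of_mem_range hPi hv
    exact ⟨Efun A s *ᵥ v, by simp only [mulVecLin_apply]; exact Rfun_fix hA hPi hPh s hfix⟩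

end Range

section Deriv

private lemma key_deriv (A P : Matrix (Fin n) (Fin n) ℂ) (hPi : P * P = P) :
    HasDerivAt (fun s : ℝ => (trace (A * Rfun A P s)).re)
      ((trace (A * (P * (A + A) * P - A * P - P * A))).re) 0 := by
  letI : NormedRing (Matrix (Fin n) (Fin n) ℂ) := Matrix.linftyOpNormedRing
  letI : NormedAlgebra ℝ (Matrix (Fin n) (Fin n) ℂ) := Matrix.linftyOpNormedAlgebra
  have he0 : Efun A 0 = 1 := Efun_zero A
  -- derivative of the exponential factor
  have he : HasDerivAt (fun s : ℝ => Efun A s) (-A) 0 := by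
    have h1 : (fun s : ℝ => Efun A s)
        = fun s : ℝ => NormedSpace.exp (s • (-A)) := by
      funext s
      rw [Efun]
      rw [smul_neg, ← Complex.coe_smul, neg_smul]
    rw [h1]
    have h2 := hasDerivAt_exp_smul_const (𝕂 := ℝ) (-A) (0 : ℝ)
    simp at h2 ⊢; exact h2
  -- derivative of S
  have hS : HasDerivAt (fun s : ℝ => Sfun A P s) (-(P * (A + A) * P)) 0 := by
    have h3 := (((he.mul he).const_mul P).mul_const P).add_const (1 - P)
    rw [he0] at h3
    simp only [mul_one, one_mul] at h3
    have h4 : (fun s : ℝ => P * (Efun A s * Efun A s) * P + (1 - P))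
        = fun s : ℝ => Sfun A P s := by funext s; rw [Sfun]
    simp only [Pi.mul_def] at h3
    rw [h4] at h3
    refine h3.congr_deriv ?_; symm
    simp only [mul_neg, neg_mul, mul_add, add_mul, neg_add]
  -- derivative of S⁻¹
  have hS0 : Sfun A P 0 = 1 := by
    rw [Sfun, Efun_zero]; simp [hPi]
  have hSinv : HasDerivAt (fun s : ℝ => (Sfun A P s)⁻¹) (P * (A + A) * P) 0 := by
    have h5 := hasFDerivAt_ringInverse (𝕜 := ℝ) (1 : (Matrix (Fin n) (Fin n) ℂ)ˣ)
    rw [Units.val_one, ← hS0] at h5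
    have h6 := h5.comp_hasDerivAt 0 hS
    have h7 : (fun s : ℝ => Ring.inverse (Sfun A P s))
        = fun s : ℝ => (Sfun A P s)⁻¹ := by
      funext s; rw [Matrix.nonsing_inv_eq_ringInverse]
    rw [Function.comp_def, h7] at h6
    refine h6.congr_deriv ?_; symm
    simp
  -- derivative of R
  have hR : HasDerivAt (fun s : ℝ => Rfun A P s)
      (P * (A + A) * P - A * P - P * A) 0 := by
    have h8 := ((he.mul_const P).mul hSinv).mul (he.const_mul P)
    rw [he0, hS0] at h8
    have h9 : (fun s : ℝ => Efun A s * P * (Sfun A P s)⁻¹ * (P * Efun A s))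
        = fun s : ℝ => Rfun A P s := by funext s; rw [Rfun]
    simp only [Pi.mul_def, he0, hS0] at h8
    rw [h9] at h8
    refine h8.congr_deriv ?_; symm
    rw [inv_one]
    simp only [one_mul, mul_one, add_mul, mul_add, neg_mul, mul_neg, sub_eq_add_neg,
      mul_assoc, hPi, hP2 hPi]
    abel
  -- compose with the continuous linear map `X ↦ (trace (A * X)).re`
  let L₀ : Matrix (Fin n) (Fin n) ℂ →ₗ[ℝ] ℝ :=
    { toFun := fun X => (trace (A * X)).re
      map_add' := fun X Y => by simp [mul_add]
      map_smul' := fun r X => by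
        simp [mul_smul_comm, Complex.real_smul, Complex.mul_re] }
  let L : Matrix (Fin n) (Fin n) ℂ →L[ℝ] ℝ :=
    ⟨L₀, L₀.continuous_of_finiteDimensional⟩
  exact L.hasFDerivAt.comp_hasDerivAt 0 hR

end Deriv

private lemma trace_identity (A P : Matrix (Fin n) (Fin n) ℂ) (hA : Aᴴ = A)
    (hPi : P * P = P) (hPh : Pᴴ = P) :
    trace (A * (P * (A + A) * P - A * P - P * A))
      = -trace ((A * P - P * A) * (A * P - P * A)ᴴ) := by
  have h : (A * P - P * A)ᴴ = P * A - A * P := by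
    rw [conjTranspose_sub, conjTranspose_mul, conjTranspose_mul, hA, hPh]
  rw [h]
  have c1 : trace (P * (A * (P * A))) = trace (A * (P * (A * P))) := by
    rw [trace_mul_comm]; congr 1; noncomm_ring
  have c3 : trace (P * (A * (A * P))) = trace (A * (A * P)) := by
    rw [trace_mul_comm, show A * (A * P) * P = A * (A * (P * P)) from by noncomm_ring, hPi]
  have c6 : trace (A * (P * (P * A))) = trace (A * (P * A)) := by rw [hP2 hPi]
  simp only [mul_sub, sub_mul, mul_add, add_mul, trace_sub, trace_add, mul_assoc]
  linear_combination c6 - c1 + c3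

private lemma trace_sq (B : Matrix (Fin n) (Fin n) ℂ) :
    (trace (B * Bᴴ)).re = ∑ i, ∑ j, Complex.normSq (B i j) := by
  have h : trace (B * Bᴴ) = ((∑ i, ∑ j, Complex.normSq (B i j) : ℝ) : ℂ) := by
    push_cast
    simp [trace, Matrix.diag, mul_apply, conjTranspose_apply, Complex.mul_conj]
  rw [h, Complex.ofReal_re]

end Stmt6Aux

/-- Along the flow `V ↦ exp(−tA)·V`, with `Q t` the matrix of the orthogonal
projection onto `exp(−tA)·V` (characterized as the Hermitian idempotent matrix
with column space `exp(−tA)·V`), the function `t ↦ Re Tr(A Q(t))` has derivative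
`−‖A Q(t) − Q(t) A‖_F² ≤ 0`, where `‖M‖_F² = Re Tr(M Mᴴ)`; the derivative
vanishes at `t` iff `A Q(t) = Q(t) A`. -/
theorem stmt6 (n k : ℕ) (A : Matrix (Fin n) (Fin n) ℂ) (hA : A.IsHermitian)
    (V : Submodule ℂ (Fin n → ℂ)) (hV : Module.finrank ℂ V = k)
    (Q : ℝ → Matrix (Fin n) (Fin n) ℂ)
    (hQidem : ∀ t, Q t * Q t = Q t) (hQherm : ∀ t, (Q t)ᴴ = Q t)
    (hQrange : ∀ t : ℝ, LinearMap.range (Q t).mulVecLin =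
      V.map (NormedSpace.exp ((-t : ℂ) • A)).mulVecLin) :
    ∀ t : ℝ,
      HasDerivAt (fun s => (Matrix.trace (A * Q s)).re)
        (-(Matrix.trace ((A * Q t - Q t * A) * (A * Q t - Q t * A)ᴴ)).re) t ∧
      (-(Matrix.trace ((A * Q t - Q t * A) * (A * Q t - Q t * A)ᴴ)).re ≤ 0) ∧
      ((-(Matrix.trace ((A * Q t - Q t * A) * (A * Q t - Q t * A)ᴴ)).re = 0) ↔
        A * Q t = Q t * A) := by
  intro t
  have hA' : Aᴴ = A := hA
  have hPi := hQidem t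
  have hPh := hQherm t
  -- identify `Q (t+s)` with the explicit projection formula
  have hQR : ∀ s : ℝ, Q (t + s) = Stmt6Aux.Rfun A (Q t) s := by
    intro s
    refine Stmt6Aux.proj_unique (hQidem (t+s)) (hQherm (t+s))
      (Stmt6Aux.Rfun_idem hA' hPi hPh s) (Stmt6Aux.Rfun_herm hA' hPh s) ?_
    rw [hQrange (t+s), Stmt6Aux.Rfun_range hA' hPi hPh s, hQrange t,
      ← Submodule.map_comp, ← Matrix.mulVecLin_mul,
      show NormedSpace.exp ((-t : ℂ) • A) = Stmt6Aux.Efun A t from rfl,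
      Stmt6Aux.Efun_mul, show s + t = t + s from add_comm s t]
    rfl
  -- the derivative statement
  have hDval : (Matrix.trace (A * (Q t * (A + A) * Q t - A * Q t - Q t * A))).re
      = -(Matrix.trace ((A * Q t - Q t * A) * (A * Q t - Q t * A)ᴴ)).re := by
    rw [Stmt6Aux.trace_identity A (Q t) hA' hPi hPh, Complex.neg_re]
  have h1 := Stmt6Aux.key_deriv A (Q t) hPi
  rw [show (fun s : ℝ => (Matrix.trace (A * Stmt6Aux.Rfun A (Q t) s)).re)
      = fun s : ℝ => (Matrix.trace (A * Q (t + s))).re from by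
    funext s; rw [hQR s]] at h1
  rw [hDval] at h1
  rw [show (0 : ℝ) = t - t from (sub_self t).symm] at h1
  have h2 := h1.comp_sub_const t t
  rw [show (fun x : ℝ => (Matrix.trace (A * Q (t + (x - t)))).re)
      = fun s : ℝ => (Matrix.trace (A * Q s)).re from by
    funext x; rw [add_sub_cancel]] at h2
  refine ⟨h2, ?_, ?_⟩
  · refine neg_nonpos.mpr ?_
    rw [Stmt6Aux.trace_sq]
    exact Finset.sum_nonneg fun i _ => Finset.sum_nonneg fun j _ => Complex.normSq_nonneg _
  · rw [neg_eq_zero, Stmt6Aux.trace_sq]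
    constructor
    · intro h
      have hB : A * Q t - Q t * A = 0 := by
        ext i j
        have h1' := (Finset.sum_eq_zero_iff_of_nonneg
          (fun i _ => Finset.sum_nonneg fun j _ => Complex.normSq_nonneg _)).mp
          h i (Finset.mem_univ i)
        have h2' := (Finset.sum_eq_zero_iff_of_nonneg
          (fun j _ => Complex.normSq_nonneg _)).mp h1' j (Finset.mem_univ j)
        simpa using Complex.normSq_eq_zero.mp h2'
      exact sub_eq_zero.mp hB
    · intro h
      rw [h]
      simp
end

section
/- Let H be a complex Hilbert space and let P, Q be orthogonal projections on H (continuous linear operators with P∘P = P, P self-adjoint, and likewise for Q) such that ‖P − Q‖ < 1 in the operator norm. Then Q restricts to an injective linear map from range(P) into range(Q), and P restricts to an injective linear map from range(Q) into range(P); in particular, range(P) is finite-dimensional if and only if range(Q) is, and in that case dim range(P) = dim range(Q). -/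
section Aux

variable {H : Type*} [NormedAddCommGroup H] [InnerProductSpace ℂ H]

lemma aux_mem_range {P : H →L[ℂ] H} (hP2 : P.comp P = P) {x : H}
    (hx : x ∈ LinearMap.range (P : H →ₗ[ℂ] H)) : P x = x := by
  obtain ⟨y, rfl⟩ := hx
  have := congrArg (fun T : H →L[ℂ] H => T y) hP2
  simpa using this

lemma aux_ker {P Q : H →L[ℂ] H} (hP2 : P.comp P = P) (hPQ : ‖P - Q‖ < 1)
    {x : H} (hx : x ∈ LinearMap.range (P : H →ₗ[ℂ] H)) (hQx : Q x = 0) : x = 0 := by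
  have hPx : P x = x := aux_mem_range hP2 hx
  have h1 : ‖x‖ ≤ ‖P - Q‖ * ‖x‖ := by
    have := (P - Q).le_opNorm x
    simpa [hPx, hQx] using this
  by_contra hne
  have hxpos : 0 < ‖x‖ := norm_pos_iff.mpr hne
  have : ‖x‖ < ‖x‖ := lt_of_le_of_lt h1 (by nlinarith)
  exact lt_irrefl _ this

lemma aux_injOn {P Q : H →L[ℂ] H} (hP2 : P.comp P = P) (hPQ : ‖P - Q‖ < 1) :
    Set.InjOn Q (LinearMap.range (P : H →ₗ[ℂ] H) : Set H) := by
  intro x hx y hy hxy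
  have hsub : x - y ∈ LinearMap.range (P : H →ₗ[ℂ] H) := sub_mem hx hy
  have : Q (x - y) = 0 := by simp [map_sub, hxy]
  have := aux_ker hP2 hPQ hsub this
  exact sub_eq_zero.mp this

end Aux

/-- If `P, Q` are orthogonal projections on a complex Hilbert space with
`‖P − Q‖ < 1`, then `Q` restricts to an injective map `range P → range Q` and
`P` to an injective map `range Q → range P`; hence `range P` is
finite-dimensional iff `range Q` is, and in that case their dimensions agree. -/
theorem stmt8 (H : Type*) [NormedAddCommGroup H] [InnerProductSpace ℂ H] [CompleteSpace H]
    (P Q : H →L[ℂ] H) (hP2 : P.comp P = P) (hP : IsSelfAdjoint P)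
    (hQ2 : Q.comp Q = Q) (hQ : IsSelfAdjoint Q) (hPQ : ‖P - Q‖ < 1) :
    Set.MapsTo Q (LinearMap.range (P : H →ₗ[ℂ] H) : Set H) (LinearMap.range (Q : H →ₗ[ℂ] H) : Set H) ∧
    Set.InjOn Q (LinearMap.range (P : H →ₗ[ℂ] H) : Set H) ∧
    Set.MapsTo P (LinearMap.range (Q : H →ₗ[ℂ] H) : Set H) (LinearMap.range (P : H →ₗ[ℂ] H) : Set H) ∧
    Set.InjOn P (LinearMap.range (Q : H →ₗ[ℂ] H) : Set H) ∧
    (FiniteDimensional ℂ (LinearMap.range (P : H →ₗ[ℂ] H)) ↔ FiniteDimensional ℂ (LinearMap.range (Q : H →ₗ[ℂ] H))) ∧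
    (FiniteDimensional ℂ (LinearMap.range (P : H →ₗ[ℂ] H)) → FiniteDimensional ℂ (LinearMap.range (Q : H →ₗ[ℂ] H)) →
      Module.finrank ℂ (LinearMap.range (P : H →ₗ[ℂ] H)) = Module.finrank ℂ (LinearMap.range (Q : H →ₗ[ℂ] H))) := by
  have hQP : ‖Q - P‖ < 1 := by rwa [norm_sub_rev]
  -- linear maps between the ranges
  let f : (LinearMap.range (P : H →ₗ[ℂ] H) : Submodule ℂ H) →ₗ[ℂ] (LinearMap.range (Q : H →ₗ[ℂ] H) : Submodule ℂ H) :=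
    LinearMap.codRestrict _ ((Q : H →ₗ[ℂ] H).domRestrict (LinearMap.range (P : H →ₗ[ℂ] H)))
      (fun x => LinearMap.mem_range_self _ _)
  let g : (LinearMap.range (Q : H →ₗ[ℂ] H) : Submodule ℂ H) →ₗ[ℂ] (LinearMap.range (P : H →ₗ[ℂ] H) : Submodule ℂ H) :=
    LinearMap.codRestrict _ ((P : H →ₗ[ℂ] H).domRestrict (LinearMap.range (Q : H →ₗ[ℂ] H)))
      (fun x => LinearMap.mem_range_self _ _)
  have hf : Function.Injective f := by
    intro x y hxy
    have : Q (x : H) = Q (y : H) := congrArg Subtype.val hxy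
    exact Subtype.ext (aux_injOn hP2 hPQ x.2 y.2 this)
  have hg : Function.Injective g := by
    intro x y hxy
    have : P (x : H) = P (y : H) := congrArg Subtype.val hxy
    exact Subtype.ext (aux_injOn hQ2 hQP x.2 y.2 this)
  refine ⟨fun x _ => LinearMap.mem_range_self _ _, aux_injOn hP2 hPQ,
    fun x _ => LinearMap.mem_range_self _ _, aux_injOn hQ2 hQP, ?_, ?_⟩
  · constructor
    · intro h; exact FiniteDimensional.of_injective g hg
    · intro h; exact FiniteDimensional.of_injective f hf
  · intro h1 h2
    exact le_antisymm (LinearMap.finrank_le_finrank_of_injective hf)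
      (LinearMap.finrank_le_finrank_of_injective hg)
end

section
/- Fix ν ∈ ℕ and a field 𝕂. Let C = ⊕_{d ∈ ℕ} C^d be the graded 𝕂-vector space with basis {a_{k,m} : 0 ≤ k ≤ ν+1, m ∈ ℕ} ∪ {b_{k,m} : 0 ≤ k ≤ ν, m ∈ ℕ}, where a_{k,m} has degree 2(k+m) and b_{k,m} has degree 2(k+m)+1, and let D : C → C be the 𝕂-linear map of degree +1 determined by D(a_{k,m}) = 0 and D(b_{k,m}) = a_{k,m+1} + a_{k+1,m}. Then D ∘ D = 0; the cohomology H^d = (ker D ∩ C^d)/D(C^{d−1}) vanishes for every odd d; for every j ∈ ℕ the space H^{2j} is one-dimensional, spanned by the class of a_{0,j}; and [a_{k,m}] = (−1)^k [a_{0,k+m}]. In particular the total cohomology is isomorphic as a graded 𝕂-vector space to the polynomial ring 𝕂[λ] with λ in degree 2. -/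
namespace Stmt9

/-- Index set for the basis elements `a_{k,m}` (degree `2(k+m)`), `0 ≤ k ≤ ν+1`. -/
abbrev AIdx (ν : ℕ) : Type := {p : ℕ × ℕ // p.1 ≤ ν + 1}

/-- Index set for the basis elements `b_{k,m}` (degree `2(k+m)+1`), `0 ≤ k ≤ ν`. -/
abbrev BIdx (ν : ℕ) : Type := {p : ℕ × ℕ // p.1 ≤ ν}

/-- The underlying vector space of the complex: the `𝕂`-vector space with basis
`{a_{k,m}} ∪ {b_{k,m}}`. -/
abbrev Cplx (𝕂 : Type*) [Field 𝕂] (ν : ℕ) : Type _ := (AIdx ν →₀ 𝕂) × (BIdx ν →₀ 𝕂)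

variable (𝕂 : Type*) [Field 𝕂] (ν : ℕ)

/-- The basis vector `a_{k,m}`. -/
noncomputable def basA (p : AIdx ν) : Cplx 𝕂 ν := (Finsupp.single p 1, 0)

/-- The basis vector `b_{k,m}`. -/
noncomputable def basB (p : BIdx ν) : Cplx 𝕂 ν := (0, Finsupp.single p 1)

/-- The differential, the `𝕂`-linear map determined by
`D a_{k,m} = 0` and `D b_{k,m} = a_{k,m+1} + a_{k+1,m}`. -/
noncomputable def D : Cplx 𝕂 ν →ₗ[𝕂] Cplx 𝕂 ν :=
  LinearMap.prod
    ((Finsupp.lsum 𝕂 fun p : BIdx ν =>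
        LinearMap.toSpanSingleton 𝕂 (AIdx ν →₀ 𝕂)
          (Finsupp.single ⟨(p.1.1, p.1.2 + 1), p.2.trans (Nat.le_succ ν)⟩ 1 +
            Finsupp.single ⟨(p.1.1 + 1, p.1.2), Nat.succ_le_succ p.2⟩ 1)).comp
      (LinearMap.snd 𝕂 (AIdx ν →₀ 𝕂) (BIdx ν →₀ 𝕂)))
    0

/-- The degree-`d` homogeneous component `C^d`: the span of the basis vectors of
degree `d` (`a_{k,m}` has degree `2(k+m)`, `b_{k,m}` has degree `2(k+m)+1`). -/
noncomputable def degComp (d : ℕ) : Submodule 𝕂 (Cplx 𝕂 ν) :=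
  Submodule.span 𝕂
    ((basA 𝕂 ν '' {p : AIdx ν | 2 * (p.1.1 + p.1.2) = d}) ∪
      (basB 𝕂 ν '' {p : BIdx ν | 2 * (p.1.1 + p.1.2) + 1 = d}))

/-- Degree-`d` cocycles: `ker D ∩ C^d`. -/
noncomputable def Zc (d : ℕ) : Submodule 𝕂 (Cplx 𝕂 ν) :=
  LinearMap.ker (D 𝕂 ν) ⊓ degComp 𝕂 ν d

/-- Degree-`d` coboundaries: `D (C^{d−1})` (which is `0` when `d = 0`). -/
noncomputable def Bc (d : ℕ) : Submodule 𝕂 (Cplx 𝕂 ν) :=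
  (degComp 𝕂 ν (d - 1)).map (D 𝕂 ν)

/-! ### Auxiliary material -/

noncomputable def TT : (BIdx ν →₀ 𝕂) →ₗ[𝕂] (AIdx ν →₀ 𝕂) :=
  Finsupp.lsum 𝕂 fun p : BIdx ν =>
    LinearMap.toSpanSingleton 𝕂 (AIdx ν →₀ 𝕂)
      (Finsupp.single ⟨(p.1.1, p.1.2 + 1), p.2.trans (Nat.le_succ ν)⟩ 1 +
        Finsupp.single ⟨(p.1.1 + 1, p.1.2), Nat.succ_le_succ p.2⟩ 1)

lemma D_eq (x : Cplx 𝕂 ν) : D 𝕂 ν x = (TT 𝕂 ν x.2, 0) := rfl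

lemma TT_single (p : BIdx ν) (c : 𝕂) :
    TT 𝕂 ν (Finsupp.single p c) =
      Finsupp.single ⟨(p.1.1, p.1.2 + 1), p.2.trans (Nat.le_succ ν)⟩ c +
        Finsupp.single ⟨(p.1.1 + 1, p.1.2), Nat.succ_le_succ p.2⟩ c := by
  simp [TT, LinearMap.toSpanSingleton_apply, smul_add, Finsupp.smul_single]

lemma D_basA (p : AIdx ν) : D 𝕂 ν (basA 𝕂 ν p) = 0 := by
  rw [D_eq]; simp [basA, Prod.ext_iff]

lemma D_basB (p : BIdx ν) :
    D 𝕂 ν (basB 𝕂 ν p) =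
      basA 𝕂 ν ⟨(p.1.1, p.1.2 + 1), p.2.trans (Nat.le_succ ν)⟩ +
        basA 𝕂 ν ⟨(p.1.1 + 1, p.1.2), Nat.succ_le_succ p.2⟩ := by
  rw [D_eq]; simp [basB, basA, TT_single, Prod.ext_iff]

lemma TT_apply (b : BIdx ν →₀ 𝕂) (k m : ℕ) (hk : k ≤ ν) :
    TT 𝕂 ν b ⟨(k, m + 1), hk.trans (Nat.le_succ ν)⟩ =
      b ⟨(k, m), hk⟩ +
        (if h : 1 ≤ k then b ⟨(k - 1, m + 1), by omega⟩ else 0) := by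
  induction b using Finsupp.induction_linear with
  | zero => simp
  | add f g hf hg =>
      rw [map_add, Finsupp.add_apply, hf, hg]
      simp only [Finsupp.add_apply]
      split_ifs <;> ring
  | single p c =>
      obtain ⟨⟨pk, pm⟩, hp⟩ := p
      rw [TT_single]
      simp only [Finsupp.add_apply, Finsupp.single_apply, Subtype.mk.injEq, Prod.mk.injEq]
      split_ifs <;> first | rfl | omega | simp_all

lemma ker_snd (x : Cplx 𝕂 ν) (hx : D 𝕂 ν x = 0) : x.2 = 0 := by
  have hT : TT 𝕂 ν x.2 = 0 := congrArg Prod.fst ((D_eq 𝕂 ν x).symm.trans hx)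
  have key : ∀ (k : ℕ) (m : ℕ) (hk : k ≤ ν), x.2 ⟨(k, m), hk⟩ = 0 := by
    intro k
    induction k with
    | zero =>
        intro m hk
        have h := TT_apply 𝕂 ν x.2 0 m hk
        rw [hT] at h
        simpa using h.symm
    | succ k ih =>
        intro m hk
        have h := TT_apply 𝕂 ν x.2 (k + 1) m hk
        rw [hT, dif_pos (by omega : 1 ≤ k + 1)] at h
        have h2 := ih (m + 1) (by omega)
        simp only [Finsupp.zero_apply, Nat.add_sub_cancel] at h
        rw [h2] at h
        rw [add_zero] at h; exact h.symm
  ext p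
  obtain ⟨⟨k, m⟩, hp⟩ := p
  simpa using key k m hp

lemma degComp_le (d : ℕ) :
    degComp 𝕂 ν d ≤
      (Finsupp.supported 𝕂 𝕂 {p : AIdx ν | 2 * (p.1.1 + p.1.2) = d}).prod
        (Finsupp.supported 𝕂 𝕂 {p : BIdx ν | 2 * (p.1.1 + p.1.2) + 1 = d}) := by
  rw [degComp]
  apply Submodule.span_le.mpr
  rintro x (⟨p, hp, rfl⟩ | ⟨p, hp, rfl⟩)
  · exact ⟨Finsupp.single_mem_supported 𝕂 1 hp, Submodule.zero_mem _⟩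
  · exact ⟨Submodule.zero_mem _, Finsupp.single_mem_supported 𝕂 1 hp⟩

lemma basA_mem_degComp (p : AIdx ν) (d : ℕ) (hd : 2 * (p.1.1 + p.1.2) = d) :
    basA 𝕂 ν p ∈ degComp 𝕂 ν d :=
  Submodule.subset_span (Or.inl ⟨p, hd, rfl⟩)

lemma basB_mem_degComp (p : BIdx ν) (d : ℕ) (hd : 2 * (p.1.1 + p.1.2) + 1 = d) :
    basB 𝕂 ν p ∈ degComp 𝕂 ν d :=
  Submodule.subset_span (Or.inr ⟨p, hd, rfl⟩)

lemma claim5' (k : ℕ) : ∀ (m j : ℕ) (hk : k ≤ ν + 1) (hj : k + m = j),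
    basA 𝕂 ν ⟨(k, m), hk⟩ - ((-1 : 𝕂) ^ k) • basA 𝕂 ν ⟨(0, j), Nat.zero_le _⟩ ∈
      Bc 𝕂 ν (2 * j) := by
  induction k with
  | zero =>
      intro m j hk hj
      have hm : m = j := by omega
      subst hm
      simp only [pow_zero, one_smul, sub_self]
      exact Submodule.zero_mem _
  | succ k ih =>
      intro m j hk hj
      have hk' : k ≤ ν := by omega
      have hmem : basB 𝕂 ν ⟨(k, m), hk'⟩ ∈ degComp 𝕂 ν (2 * j - 1) :=
        basB_mem_degComp 𝕂 ν _ _ (by simp; omega)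
      have hDb : D 𝕂 ν (basB 𝕂 ν ⟨(k, m), hk'⟩) ∈ Bc 𝕂 ν (2 * j) :=
        ⟨_, hmem, rfl⟩
      have hIH := ih (m + 1) j (by omega) (by omega)
      have key :
          basA 𝕂 ν ⟨(k + 1, m), hk⟩ -
              ((-1 : 𝕂) ^ (k + 1)) • basA 𝕂 ν ⟨(0, j), Nat.zero_le _⟩ =
            D 𝕂 ν (basB 𝕂 ν ⟨(k, m), hk'⟩) -
              (basA 𝕂 ν ⟨(k, m + 1), by omega⟩ -
                ((-1 : 𝕂) ^ k) • basA 𝕂 ν ⟨(0, j), Nat.zero_le _⟩) := by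
        rw [D_basB]
        simp only [pow_succ, mul_comm, neg_smul, one_smul, mul_neg, mul_one, neg_neg]
        module
      rw [key]
      exact Submodule.sub_mem _ hDb hIH

noncomputable def phi : Cplx 𝕂 ν →ₗ[𝕂] 𝕂 :=
  (Finsupp.lsum 𝕂 fun p : AIdx ν => LinearMap.toSpanSingleton 𝕂 𝕂 ((-1 : 𝕂) ^ p.1.1)) ∘ₗ
    LinearMap.fst 𝕂 _ _

lemma phi_basA (p : AIdx ν) : phi 𝕂 ν (basA 𝕂 ν p) = (-1 : 𝕂) ^ p.1.1 := by
  simp [phi, basA, LinearMap.toSpanSingleton_apply]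

lemma phi_D (x : Cplx 𝕂 ν) : phi 𝕂 ν (D 𝕂 ν x) = 0 := by
  rw [D_eq]
  have : ∀ b : BIdx ν →₀ 𝕂,
      (Finsupp.lsum 𝕂 fun p : AIdx ν =>
        LinearMap.toSpanSingleton 𝕂 𝕂 ((-1 : 𝕂) ^ p.1.1)) (TT 𝕂 ν b) = 0 := by
    intro b
    induction b using Finsupp.induction_linear with
    | zero => simp
    | add f g hf hg => rw [map_add, map_add, hf, hg, add_zero]
    | single p c =>
        rw [TT_single, map_add]
        simp [LinearMap.toSpanSingleton_apply, pow_succ]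
  simpa [phi] using this x.2

lemma decompA (f : AIdx ν →₀ 𝕂) :
    ((f, 0) : Cplx 𝕂 ν) = f.sum (fun p c => c • basA 𝕂 ν p) := by
  refine Prod.ext ?_ ?_
  · rw [Finsupp.sum, Prod.fst_sum]
    simp only [basA, Prod.smul_mk, Finsupp.smul_single, smul_eq_mul, mul_one]
    exact (Finsupp.sum_single f).symm
  · rw [Finsupp.sum, Prod.snd_sum]
    simp [basA]



/-- For the complex with `D b_{k,m} = a_{k,m+1} + a_{k+1,m}` (`0 ≤ k ≤ ν`):
`D² = 0`; `D` has degree `+1` (coboundaries are cocycles); the odd cohomology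
vanishes; each even cohomology `H^{2j}` is one-dimensional, spanned by the
class of `a_{0,j}`; and `[a_{k,m}] = (−1)^k [a_{0,k+m}]`.  In particular the
total cohomology is the polynomial ring `𝕂[λ]` with `λ` in degree `2`. -/
theorem stmt9 :
    (D 𝕂 ν ∘ₗ D 𝕂 ν = 0) ∧
    (∀ d : ℕ, Bc 𝕂 ν d ≤ Zc 𝕂 ν d) ∧
    (∀ d : ℕ, Odd d → Zc 𝕂 ν d ≤ Bc 𝕂 ν d) ∧
    (∀ j : ℕ,
      basA 𝕂 ν ⟨(0, j), Nat.zero_le _⟩ ∈ Zc 𝕂 ν (2 * j) ∧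
      basA 𝕂 ν ⟨(0, j), Nat.zero_le _⟩ ∉ Bc 𝕂 ν (2 * j) ∧
      ∀ x ∈ Zc 𝕂 ν (2 * j), ∃ c : 𝕂,
        x - c • basA 𝕂 ν ⟨(0, j), Nat.zero_le _⟩ ∈ Bc 𝕂 ν (2 * j)) ∧
    (∀ (k m : ℕ) (hk : k ≤ ν + 1),
      basA 𝕂 ν ⟨(k, m), hk⟩ - ((-1 : 𝕂) ^ k) • basA 𝕂 ν ⟨(0, k + m), Nat.zero_le _⟩ ∈
        Bc 𝕂 ν (2 * (k + m))) := by
  have hDD : D 𝕂 ν ∘ₗ D 𝕂 ν = 0 := by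
    apply LinearMap.ext
    intro x
    rw [LinearMap.comp_apply, D_eq, D_eq]
    simp [Prod.ext_iff]
  refine ⟨hDD, ?_, ?_, ?_, ?_⟩
  · -- Bc ≤ Zc
    intro d
    rw [Bc, degComp, Submodule.map_span]
    apply Submodule.span_le.mpr
    rintro _ ⟨u, hu, rfl⟩
    rcases hu with ⟨p, hp, rfl⟩ | ⟨p, hp, rfl⟩
    · rw [D_basA]
      exact Submodule.zero_mem _
    · obtain ⟨⟨k, m⟩, hpk⟩ := p
      simp only [Set.mem_setOf_eq] at hp
      constructor
      · have h := LinearMap.ext_iff.mp hDD (basB 𝕂 ν ⟨(k, m), hpk⟩)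
        rw [LinearMap.comp_apply] at h
        exact LinearMap.mem_ker.mpr h
      · rw [D_basB]
        exact Submodule.add_mem _
          (basA_mem_degComp 𝕂 ν _ _ (by simp only []; omega))
          (basA_mem_degComp 𝕂 ν _ _ (by simp only []; omega))
  · -- odd vanishing
    intro d hd x hx
    obtain ⟨hker, hdeg⟩ := hx
    have h2 : x.2 = 0 := ker_snd 𝕂 ν x (LinearMap.mem_ker.mp hker)
    have hsupp := (Submodule.mem_prod.mp (degComp_le 𝕂 ν d hdeg)).1
    rw [Finsupp.mem_supported] at hsupp
    have h1 : x.1 = 0 := by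
      ext q
      rw [Finsupp.zero_apply]
      by_contra hq
      have hmem := hsupp (Finsupp.mem_support_iff.mpr hq)
      simp only [Set.mem_setOf_eq] at hmem
      obtain ⟨t, rfl⟩ := hd
      omega
    have hx0 : x = 0 := Prod.ext h1 h2
    rw [hx0]
    exact Submodule.zero_mem _
  · -- even cohomology
    intro j
    refine ⟨⟨LinearMap.mem_ker.mpr (D_basA 𝕂 ν _),
        basA_mem_degComp 𝕂 ν _ _ (by simp)⟩, ?_, ?_⟩
    · rintro ⟨y, -, hDy⟩
      have h0 := phi_D 𝕂 ν y
      rw [hDy, phi_basA] at h0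
      simpa using h0
    · intro x hx
      obtain ⟨hker, hdeg⟩ := hx
      obtain ⟨f, g⟩ := x
      have h2 : g = 0 := ker_snd 𝕂 ν (f, g) (LinearMap.mem_ker.mp hker)
      subst h2
      have hsupp := (Submodule.mem_prod.mp (degComp_le 𝕂 ν (2 * j) hdeg)).1
      rw [Finsupp.mem_supported] at hsupp
      refine ⟨phi 𝕂 ν ((f, 0) : Cplx 𝕂 ν), ?_⟩
      have hphi : phi 𝕂 ν ((f, 0) : Cplx 𝕂 ν) =
          ∑ p ∈ f.support, f p * (-1) ^ p.1.1 := by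
        rw [decompA 𝕂 ν f, Finsupp.sum, map_sum]
        refine Finset.sum_congr rfl fun p hp => ?_
        rw [map_smul, phi_basA, smul_eq_mul]
      rw [hphi, decompA 𝕂 ν f, Finsupp.sum, Finset.sum_smul, ← Finset.sum_sub_distrib]
      refine Submodule.sum_mem _ fun p hp => ?_
      have hw : p.1.1 + p.1.2 = j := by
        have hm := hsupp hp
        simp only [Set.mem_setOf_eq] at hm
        omega
      have hcl := claim5' 𝕂 ν p.1.1 p.1.2 j p.2 hw
      have heq : f p • basA 𝕂 ν p - (f p * (-1) ^ p.1.1) • basA 𝕂 ν ⟨(0, j), Nat.zero_le _⟩ =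
          f p • (basA 𝕂 ν ⟨(p.1.1, p.1.2), p.2⟩ -
            ((-1 : 𝕂) ^ p.1.1) • basA 𝕂 ν ⟨(0, j), Nat.zero_le _⟩) := by
        rw [smul_sub, smul_smul]
      rw [heq]
      exact Submodule.smul_mem _ _ hcl
  · intro k m hk
    exact claim5' 𝕂 ν k m (k + m) hk rfl


end Stmt9
end
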